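/- arXiv:1903.09793 — 13 statements merged into one kernel-verified Lean document; each statement's English description precedes it below -/
import Mathlib

section
/- Let f : ℝ^N_+ → ℝ_+ be a concave function on the nonnegative orthant. Then f is monotone (0 ≤ x ≤ y coordinatewise implies f(x) ≤ f(y)) and weakly scalable (f(αx) ≤ α f(x) for all x ∈ ℝ^N_+ and α ≥ 1); hence f is a weakly standard interference (WSI) function. If moreover f is positive, i.e., f(x) > 0 for every x ∈ ℝ^N_+, then f is scalable (f(αx) < α f(x) for all x ∈ ℝ^N_+ and α > 1); hence f is a standard interference (SI) function. -/
open Filter Topology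

/-- A nonnegative concave function on the nonnegative orthant is
monotone and weakly scalable (hence WSI); if moreover positive, it is scalable
(hence SI). -/
theorem stmt0 {N : ℕ} (f : (Fin N → ℝ) → ℝ)
    (hnn : ∀ x : Fin N → ℝ, 0 ≤ x → 0 ≤ f x)
    (hconc : ConcaveOn ℝ {x : Fin N → ℝ | 0 ≤ x} f) :
    ((∀ x y : Fin N → ℝ, 0 ≤ x → x ≤ y → f x ≤ f y) ∧
      (∀ x : Fin N → ℝ, 0 ≤ x → ∀ α : ℝ, 1 ≤ α → f (α • x) ≤ α * f x)) ∧
    ((∀ x : Fin N → ℝ, 0 ≤ x → 0 < f x) →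
      (∀ x : Fin N → ℝ, 0 ≤ x → ∀ α : ℝ, 1 < α → f (α • x) < α * f x)) := by
  have key : ∀ x : Fin N → ℝ, 0 ≤ x → ∀ α : ℝ, 1 ≤ α →
      (1/α) * f (α • x) + (1 - 1/α) * f 0 ≤ f x := by
    intro x hx α hα
    have hα0 : 0 < α := lt_of_lt_of_le one_pos hα
    have hmem : (α • x) ∈ {x : Fin N → ℝ | 0 ≤ x} := by
      intro i; exact mul_nonneg hα0.le (hx i)
    have h0mem : (0 : Fin N → ℝ) ∈ {x : Fin N → ℝ | 0 ≤ x} :=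
      fun i => le_rfl
    have h1 : (0:ℝ) ≤ 1/α := by positivity
    have h2 : (0:ℝ) ≤ 1 - 1/α := by
      have : 1/α ≤ 1 := by rw [div_le_one hα0]; exact hα
      linarith
    have h3 : (1/α) + (1 - 1/α) = 1 := by ring
    have := hconc.2 hmem h0mem h1 h2 h3
    have heq : (1/α) • (α • x) + (1 - 1/α) • (0 : Fin N → ℝ) = x := by
      funext i
      simp only [Pi.add_apply, Pi.smul_apply, smul_eq_mul, Pi.zero_apply, mul_zero, add_zero]
      field_simp
    rw [heq] at this
    simpa [smul_eq_mul] using this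
  constructor
  · constructor
    · intro x y hx hxy
      by_contra h
      push_neg at h
      have hfx : 0 ≤ f x := hnn x hx
      have hy : (0:Fin N → ℝ) ≤ y := le_trans hx hxy
      have hfy : 0 ≤ f y := hnn y hy
      have hfx0 : 0 < f x := lt_of_le_of_lt hfy h
      obtain ⟨a, ha⟩ : ∃ a : ℝ, a = (f x - f y) / (2 * f x) := ⟨_, rfl⟩
      have ha0 : 0 < a := by rw [ha]; exact div_pos (by linarith) (by positivity)
      have ha1 : a ≤ 1/2 := by
        rw [ha, div_le_div_iff₀ (by positivity) (by norm_num)]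
        nlinarith
      obtain ⟨z, hz⟩ : ∃ z : Fin N → ℝ, z = fun i => x i + (1/a) * (y i - x i) :=
        ⟨_, rfl⟩
      have hzmem : z ∈ {x : Fin N → ℝ | 0 ≤ x} := by
        intro i
        have h1 := hxy i
        have h2 : (0:ℝ) ≤ x i := hx i
        have h3 : 0 ≤ (1/a) * (y i - x i) := mul_nonneg (by positivity) (by linarith)
        rw [hz]; dsimp; linarith
      have hxmem : x ∈ {x : Fin N → ℝ | 0 ≤ x} := hx
      have h2 : (0:ℝ) ≤ 1 - a := by linarith
      have h3 : a + (1 - a) = 1 := by ring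
      have hcc := hconc.2 hzmem hxmem ha0.le h2 h3
      have heq : a • z + (1 - a) • x = y := by
        funext i
        rw [hz]
        simp only [Pi.add_apply, Pi.smul_apply, smul_eq_mul]
        field_simp
        ring
      rw [heq] at hcc
      simp only [smul_eq_mul] at hcc
      have hfz : 0 ≤ f z := hnn z hzmem
      have haf : a * f x = (f x - f y) / 2 := by
        rw [ha]; field_simp
      nlinarith [mul_nonneg ha0.le hfz]
    · intro x hx α hα
      have hα0 : 0 < α := lt_of_lt_of_le one_pos hα
      have h0 : (0:ℝ) ≤ f 0 := hnn 0 (fun i => le_rfl)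
      have h2 : (0:ℝ) ≤ 1 - 1/α := by
        have : 1/α ≤ 1 := by rw [div_le_one hα0]; exact hα
        linarith
      have hk := key x hx α hα
      have h4 : (1/α) * f (α • x) ≤ f x := by nlinarith
      calc f (α • x) = α * ((1/α) * f (α • x)) := by field_simp
        _ ≤ α * f x := by nlinarith
  · intro hpos x hx α hα
    have hα0 : 0 < α := lt_trans one_pos hα
    have h0 : (0:ℝ) < f 0 := hpos 0 (fun i => le_rfl)
    have h2 : (0:ℝ) < 1 - 1/α := by
      have : 1/α < 1 := by rw [div_lt_one hα0]; exact hα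
      linarith
    have hk := key x hx α hα.le
    have h4 : (1/α) * f (α • x) < f x := by nlinarith
    calc f (α • x) = α * ((1/α) * f (α • x)) := by field_simp
      _ < α * f x := by nlinarith
end

section
/- Let f : ℝ^N_+ → ℝ_+ be a WSI function. Then for every x ∈ ℝ^N_+ the limit lim_{h→∞} f(hx)/h exists and is a nonnegative real number (i.e., the function h ↦ f(hx)/h converges as h → ∞). -/
open Filter Topology

/-- For a WSI function f and every x in the nonnegative orthant,
the limit lim_{h→∞} f(hx)/h exists and is a nonnegative real. -/
theorem stmt2 {N : ℕ} (f : (Fin N → ℝ) → ℝ)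
    (hnn : ∀ x : Fin N → ℝ, 0 ≤ x → 0 ≤ f x)
    (hmono : ∀ x y : Fin N → ℝ, 0 ≤ x → x ≤ y → f x ≤ f y)
    (hws : ∀ x : Fin N → ℝ, 0 ≤ x → ∀ α : ℝ, 1 ≤ α → f (α • x) ≤ α * f x)
    (x : Fin N → ℝ) (hx : 0 ≤ x) :
    ∃ L : ℝ, 0 ≤ L ∧ Tendsto (fun h : ℝ => f (h • x) / h) atTop (nhds L) := by
  -- key monotonicity: for 1 ≤ a ≤ b, f(b•x)/b ≤ f(a•x)/a
  have key : ∀ a b : ℝ, 1 ≤ a → a ≤ b → f (b • x) / b ≤ f (a • x) / a := by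
    intro a b ha hab
    have ha0 : (0:ℝ) < a := lt_of_lt_of_le one_pos ha
    have hb0 : (0:ℝ) < b := lt_of_lt_of_le ha0 hab
    have hax : 0 ≤ a • x := smul_nonneg ha0.le hx
    have hα : 1 ≤ b / a := (one_le_div ha0).2 hab
    have h1 : f (b • x) ≤ (b / a) * f (a • x) := by
      have := hws (a • x) hax (b / a) hα
      rwa [smul_smul, div_mul_cancel₀ _ ha0.ne'] at this
    have h2 : f (b • x) / b ≤ ((b / a) * f (a • x)) / b :=
      div_le_div_of_nonneg_right h1 hb0.le
    calc f (b • x) / b ≤ ((b / a) * f (a • x)) / b := h2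
      _ = f (a • x) / a := by field_simp
  set G : ℝ → ℝ := fun h => f ((max h 1) • x) / (max h 1) with hG
  have hGanti : Antitone G := by
    intro a b hab
    exact key (max a 1) (max b 1) (le_max_right _ _) (max_le_max hab le_rfl)
  have hGnn : ∀ h, 0 ≤ G h := by
    intro h
    have h1 : (0:ℝ) < max h 1 := lt_of_lt_of_le one_pos (le_max_right _ _)
    exact div_nonneg (hnn _ (smul_nonneg h1.le hx)) h1.le
  have hbdd : BddBelow (Set.range G) := ⟨0, by rintro _ ⟨h, rfl⟩; exact hGnn h⟩
  refine ⟨⨅ h, G h, le_ciInf hGnn, ?_⟩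
  have htend : Tendsto G atTop (nhds (⨅ h, G h)) :=
    tendsto_atTop_ciInf hGanti hbdd
  refine htend.congr' ?_
  filter_upwards [eventually_ge_atTop (1:ℝ)] with h hh
  simp [hG, max_eq_left hh]
end

section
/- Let f : ℝ^N_+ → ℝ_+ be a WSI function and x ∈ ℝ^N_+, and let f_∞(x) := lim_{h→∞} f(hx)/h (this limit exists). Then for every sequence (x_n) ⊂ ℝ^N_+ with x_n → x and every sequence (h_n) ⊂ ℝ_{++} with h_n → ∞, liminf_{n→∞} f(h_n x_n)/h_n ≥ f_∞(x). Consequently, the infimum of liminf_{n→∞} f(h_n x_n)/h_n over all such pairs of sequences equals f_∞(x) (it is attained by the constant sequence x_n = x), i.e., the asymptotic function of f at x coincides with the ray limit lim_{h→∞} f(hx)/h. -/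
open Filter Topology

/-- For a WSI function f and x in the nonnegative orthant, writing
f_∞(x) = lim_{h→∞} f(hx)/h = L, every sequence x_n → x in the orthant and
h_n → ∞ with h_n > 0 satisfies liminf f(h_n x_n)/h_n ≥ L; consequently the
infimum over all such sequences of this liminf (the asymptotic function of f
at x) equals L. -/
theorem stmt3 {N : ℕ} (f : (Fin N → ℝ) → ℝ)
    (hnn : ∀ x : Fin N → ℝ, 0 ≤ x → 0 ≤ f x)
    (hmono : ∀ x y : Fin N → ℝ, 0 ≤ x → x ≤ y → f x ≤ f y)
    (hws : ∀ x : Fin N → ℝ, 0 ≤ x → ∀ α : ℝ, 1 ≤ α → f (α • x) ≤ α * f x)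
    (x : Fin N → ℝ) (hx : 0 ≤ x) (L : ℝ)
    (hlim : Tendsto (fun h : ℝ => f (h • x) / h) atTop (nhds L)) :
    (∀ (xn : ℕ → Fin N → ℝ) (hn : ℕ → ℝ),
        (∀ n, 0 ≤ xn n) → Tendsto xn atTop (nhds x) →
        (∀ n, 0 < hn n) → Tendsto hn atTop atTop →
        (L : EReal) ≤
          Filter.liminf (fun n => ((f (hn n • xn n) / hn n : ℝ) : EReal)) atTop) ∧
    sInf {v : EReal | ∃ (xn : ℕ → Fin N → ℝ) (hn : ℕ → ℝ),
        (∀ n, 0 ≤ xn n) ∧ Tendsto xn atTop (nhds x) ∧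
        (∀ n, 0 < hn n) ∧ Tendsto hn atTop atTop ∧
        v = Filter.liminf (fun n => ((f (hn n • xn n) / hn n : ℝ) : EReal)) atTop}
      = (L : EReal) := by
  -- L ≥ 0
  have hL0 : 0 ≤ L := by
    refine ge_of_tendsto hlim ?_
    filter_upwards [eventually_ge_atTop (1:ℝ)] with h hh
    have hxh : (0:Fin N → ℝ) ≤ h • x := smul_nonneg (by linarith) hx
    exact div_nonneg (hnn _ hxh) (by linarith)
  have key : ∀ (xn : ℕ → Fin N → ℝ) (hn : ℕ → ℝ),
      (∀ n, 0 ≤ xn n) → Tendsto xn atTop (nhds x) →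
      (∀ n, 0 < hn n) → Tendsto hn atTop atTop →
      (L : EReal) ≤
        Filter.liminf (fun n => ((f (hn n • xn n) / hn n : ℝ) : EReal)) atTop := by
    intro xn hn hxnn hxnl hhn hhnl
    rw [le_liminf_iff]
    intro y hy
    -- main real-level bound
    have main : ∀ c : ℝ, c < L → ∀ᶠ n in atTop, c < f (hn n • xn n) / hn n := by
      intro c hc
      -- choose t ∈ (0,1) with c < t * L
      obtain ⟨t, ht0, ht1, htc⟩ : ∃ t : ℝ, 0 < t ∧ t < 1 ∧ c < t * L := by
        rcases eq_or_lt_of_le hL0 with hL | hL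
        · exact ⟨1/2, by norm_num, by norm_num, by rw [← hL, mul_zero]; linarith⟩
        · refine ⟨max (1/2) ((c/L + 1)/2), lt_max_of_lt_left (by norm_num), ?_, ?_⟩
          · have : c / L < 1 := (div_lt_one hL).2 hc
            exact max_lt (by norm_num) (by linarith)
          · have h1 : (c/L + 1)/2 ≤ max (1/2) ((c/L + 1)/2) := le_max_right _ _
            have h3 := mul_le_mul_of_nonneg_right h1 hL.le
            have h2 : (c/L + 1)/2 * L = (c + L)/2 := by field_simp
            rw [h2] at h3
            linarith
      -- eventually xn n ≥ t • x
      have hev1 : ∀ᶠ n in atTop, ∀ i, t * x i ≤ xn n i := by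
        rw [eventually_all]
        intro i
        have hx' : (0:ℝ) ≤ x i := hx i
        rcases eq_or_lt_of_le hx' with hxi | hxi
        · exact Eventually.of_forall fun n => by
            rw [← hxi, mul_zero]; exact hxnn n i
        · have hlt : t * x i < x i := by nlinarith
          have : Tendsto (fun n => xn n i) atTop (nhds (x i)) :=
            (tendsto_pi_nhds.1 hxnl) i
          exact this.eventually (eventually_ge_nhds hlt)
      -- the scaled ray limit
      have hcomp : Tendsto (fun n => f ((t * hn n) • x) / (t * hn n)) atTop (nhds L) :=
        hlim.comp (hhnl.const_mul_atTop ht0)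
      have hev2 : ∀ᶠ n in atTop, c / t < f ((t * hn n) • x) / (t * hn n) := by
        have : c / t < L := (div_lt_iff₀' ht0).2 htc
        exact hcomp.eventually (eventually_gt_nhds this)
      filter_upwards [hev1, hev2] with n h1 h2
      have hpos : 0 < hn n := hhn n
      have hth : 0 < t * hn n := by positivity
      have hle : (t * hn n) • x ≤ hn n • xn n := by
        intro i
        simp only [Pi.smul_apply, smul_eq_mul]
        calc t * hn n * x i = hn n * (t * x i) := by ring
          _ ≤ hn n * xn n i := by
            exact mul_le_mul_of_nonneg_left (h1 i) hpos.le
      have hmle : f ((t * hn n) • x) ≤ f (hn n • xn n) :=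
        hmono _ _ (smul_nonneg hth.le hx) hle
      have ht' : t ≠ 0 := ht0.ne'
      have hh' : hn n ≠ 0 := hpos.ne'
      have hfin : c < f ((t * hn n) • x) / hn n := by
        have h2' : c / t * t < f ((t * hn n) • x) / (t * hn n) * t :=
          mul_lt_mul_of_pos_right h2 ht0
        have e1 : c / t * t = c := by field_simp
        have e2 : f ((t * hn n) • x) / (t * hn n) * t = f ((t * hn n) • x) / hn n := by
          field_simp
        rwa [e1, e2] at h2'
      exact hfin.trans_le (div_le_div_of_nonneg_right hmle hpos.le)
    -- cases on y : EReal
    induction y with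
    | bot => exact Eventually.of_forall fun n => EReal.bot_lt_coe _
    | coe c =>
      have : c < L := by exact_mod_cast hy
      filter_upwards [main c this] with n hn'
      exact_mod_cast hn'
    | top => exact absurd hy (by simp)
  refine ⟨key, ?_⟩
  apply le_antisymm
  · apply sInf_le
    refine ⟨fun _ => x, fun n => (n : ℝ) + 1, fun n => hx, tendsto_const_nhds,
      fun n => by positivity, ?_, ?_⟩
    · exact tendsto_atTop_add_const_right _ _ tendsto_natCast_atTop_atTop
    · have : Tendsto (fun n : ℕ => ((f (((n:ℝ)+1) • x) / ((n:ℝ)+1) : ℝ) : EReal))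
          atTop (nhds (L : EReal)) := by
        exact (EReal.continuous_coe_iff.mpr continuous_id).continuousAt.tendsto.comp
          (hlim.comp (tendsto_atTop_add_const_right _ _ tendsto_natCast_atTop_atTop)) |>.congr (fun n => rfl)
      exact (this.liminf_eq).symm
  · apply le_sInf
    rintro v ⟨xn, hn, h1, h2, h3, h4, rfl⟩
    exact key xn hn h1 h2 h3 h4
end

section
/- Let f : ℝ^N_+ → ℝ_+ be a WSI function and define f_∞ : ℝ^N_+ → ℝ_+ by f_∞(x) = lim_{h→∞} f(hx)/h (this limit exists). Then f_∞ is positively homogeneous on ℝ^N_+, i.e., f_∞(αx) = α f_∞(x) for all x ∈ ℝ^N_+ and α ≥ 0. If in addition f is continuous on ℝ^N_+, then f_∞ is continuous on ℝ^N_+. -/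
open Filter Topology

/-- The asymptotic function f_∞ of a WSI function f is positively
homogeneous on the nonnegative orthant; if f is continuous on the orthant, so
is f_∞. -/
theorem stmt4 {N : ℕ} (f : (Fin N → ℝ) → ℝ)
    (hnn : ∀ x : Fin N → ℝ, 0 ≤ x → 0 ≤ f x)
    (hmono : ∀ x y : Fin N → ℝ, 0 ≤ x → x ≤ y → f x ≤ f y)
    (hws : ∀ x : Fin N → ℝ, 0 ≤ x → ∀ α : ℝ, 1 ≤ α → f (α • x) ≤ α * f x)
    (F : (Fin N → ℝ) → ℝ)
    (hF : ∀ x : Fin N → ℝ, 0 ≤ x →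
      Tendsto (fun h : ℝ => f (h • x) / h) atTop (nhds (F x))) :
    (∀ x : Fin N → ℝ, 0 ≤ x → ∀ α : ℝ, 0 ≤ α → F (α • x) = α * F x) ∧
    (ContinuousOn f {x : Fin N → ℝ | 0 ≤ x} →
      ContinuousOn F {x : Fin N → ℝ | 0 ≤ x}) := by
  -- F is nonnegative
  have hFnn : ∀ x : Fin N → ℝ, 0 ≤ x → 0 ≤ F x := by
    intro x hx
    refine ge_of_tendsto (hF x hx) ?_
    filter_upwards [eventually_gt_atTop (0 : ℝ)] with h hh
    exact div_nonneg (hnn _ (smul_nonneg hh.le hx)) hh.le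
  -- antitonicity of h ↦ f (h•x)/h
  have hanti : ∀ x : Fin N → ℝ, 0 ≤ x → ∀ h h' : ℝ, 0 < h → h ≤ h' →
      f (h' • x) / h' ≤ f (h • x) / h := by
    intro x hx h h' hh hhh
    have hh' : 0 < h' := hh.trans_le hhh
    have hα : 1 ≤ h' / h := (one_le_div hh).2 hhh
    have hkey := hws (h • x) (smul_nonneg hh.le hx) (h' / h) hα
    rw [smul_smul, div_mul_cancel₀ _ hh.ne'] at hkey
    have heq : (h' / h * f (h • x)) / h' = f (h • x) / h := by
      field_simp
    calc f (h' • x) / h' ≤ (h' / h * f (h • x)) / h' := by gcongr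
      _ = f (h • x) / h := heq
  -- F x ≤ f (h•x)/h for h > 0
  have hFle : ∀ x : Fin N → ℝ, 0 ≤ x → ∀ h : ℝ, 0 < h → F x ≤ f (h • x) / h := by
    intro x hx h hh
    refine le_of_tendsto (hF x hx) ?_
    filter_upwards [eventually_ge_atTop h] with h' hh'
    exact hanti x hx h h' hh hh'
  -- monotonicity of F
  have hFmono : ∀ x y : Fin N → ℝ, 0 ≤ x → x ≤ y → F x ≤ F y := by
    intro x y hx hxy
    refine le_of_tendsto_of_tendsto (hF x hx) (hF y (hx.trans hxy)) ?_
    filter_upwards [eventually_gt_atTop (0 : ℝ)] with h hh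
    gcongr
    exact hmono _ _ (smul_nonneg hh.le hx) (smul_le_smul_of_nonneg_left hxy hh.le)
  -- F 0 = 0
  have hF0 : F 0 = 0 := by
    have h1 : Tendsto (fun h : ℝ => f (h • (0 : Fin N → ℝ)) / h) atTop (nhds 0) := by
      have : (fun h : ℝ => f (h • (0 : Fin N → ℝ)) / h) = fun h : ℝ => f 0 * h⁻¹ := by
        funext h; simp [smul_zero, div_eq_mul_inv]
      rw [this]
      simpa using tendsto_inv_atTop_zero.const_mul (f 0)
    exact tendsto_nhds_unique (hF 0 le_rfl) h1
  -- homogeneity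
  have hhom : ∀ x : Fin N → ℝ, 0 ≤ x → ∀ α : ℝ, 0 ≤ α → F (α • x) = α * F x := by
    intro x hx α hα
    rcases hα.eq_or_lt with h0 | h0
    · rw [← h0]; simp [hF0]
    · have htend : Tendsto (fun h : ℝ => f (h • (α • x)) / h) atTop (nhds (α * F x)) := by
        have h1 : Tendsto (fun h : ℝ => h * α) atTop atTop :=
          tendsto_id.atTop_mul_const h0
        have h2 : Tendsto (fun h : ℝ => f ((h * α) • x) / (h * α)) atTop (nhds (F x)) :=
          (hF x hx).comp h1
        have h3 : Tendsto (fun h : ℝ => α * (f ((h * α) • x) / (h * α))) atTop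
            (nhds (α * F x)) := h2.const_mul α
        refine h3.congr' ?_
        filter_upwards [eventually_gt_atTop (0 : ℝ)] with h hh
        rw [smul_smul, mul_comm h α]
        field_simp
      exact tendsto_nhds_unique (hF (α • x) (smul_nonneg hα hx)) htend
  refine ⟨hhom, ?_⟩
  intro hfc x hx
  have hxset : x ∈ {x : Fin N → ℝ | 0 ≤ x} := hx
  show Tendsto F (𝓝[{x : Fin N → ℝ | 0 ≤ x}] x) (𝓝 (F x))
  rw [tendsto_order]
  constructor
  · -- lower bound
    intro a ha
    rcases lt_or_ge a 0 with h0 | h0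
    · filter_upwards [self_mem_nhdsWithin] with y hy
      exact h0.trans_le (hFnn y hy)
    · have hFxpos : 0 < F x := h0.trans_lt ha
      set l : ℝ := (a / F x + 1) / 2 with hldef
      have hq1 : a / F x < 1 := (div_lt_one hFxpos).2 ha
      have hq0 : 0 ≤ a / F x := div_nonneg h0 hFxpos.le
      have hl1 : l < 1 := by rw [hldef]; linarith
      have hl0 : 0 ≤ l := by rw [hldef]; linarith
      have hla : a < l * F x := by
        have : a / F x < l := by rw [hldef]; linarith
        calc a = (a / F x) * F x := by field_simp
          _ < l * F x := by exact mul_lt_mul_of_pos_right this hFxpos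
      have hev : ∀ᶠ y in 𝓝[{x : Fin N → ℝ | 0 ≤ x}] x, l • x ≤ y := by
        have hall : ∀ i : Fin N, ∀ᶠ y in 𝓝[{x : Fin N → ℝ | 0 ≤ x}] x,
            l * x i ≤ y i := by
          intro i
          rcases (hx i).eq_or_lt with hxi | hxi
          · filter_upwards [self_mem_nhdsWithin] with y hy
            have hz : l * x i = 0 := by rw [← hxi]; simp
            rw [hz]; simpa using hy i
          · have hxi' : 0 < x i := by simpa using hxi
            have hlt : l * x i < x i := by nlinarith
            have hcw : Tendsto (fun y : Fin N → ℝ => y i)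
                (𝓝[{x : Fin N → ℝ | 0 ≤ x}] x) (𝓝 (x i)) :=
              (continuous_apply i).continuousWithinAt
            exact (hcw.eventually_const_lt hlt).mono fun y hy => hy.le
        filter_upwards [eventually_all.2 hall] with y hy
        intro i
        simpa [smul_eq_mul] using hy i
      filter_upwards [hev, self_mem_nhdsWithin] with y hy hys
      calc a < l * F x := hla
        _ = F (l • x) := (hhom x hx l hl0).symm
        _ ≤ F y := hFmono _ _ (smul_nonneg hl0 hx) hy
  · -- upper bound
    intro a ha
    have hev : ∀ᶠ h : ℝ in atTop, f (h • x) / h < a :=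
      (hF x hx).eventually_lt_const ha
    obtain ⟨h, hh1, hha⟩ := ((eventually_ge_atTop (1 : ℝ)).and hev).exists
    have hhpos : (0 : ℝ) < h := lt_of_lt_of_le one_pos hh1
    have hcont : ContinuousWithinAt (fun y : Fin N → ℝ => f (h • y) / h)
        {x : Fin N → ℝ | 0 ≤ x} x := by
      apply ContinuousWithinAt.div_const
      refine ContinuousWithinAt.comp (hfc (h • x) (smul_nonneg hhpos.le hx : 0 ≤ h • x))
        ((continuous_const_smul h).continuousWithinAt) ?_
      intro y hy
      exact (smul_nonneg hhpos.le hy : 0 ≤ h • y)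
    have hev2 : ∀ᶠ y in 𝓝[{x : Fin N → ℝ | 0 ≤ x}] x, f (h • y) / h < a :=
      hcont.eventually_lt_const hha
    filter_upwards [hev2, self_mem_nhdsWithin] with y h1 h2
    exact lt_of_le_of_lt (hFle y h2 h hhpos) h1
end

section
/- Let f : ℝ^N_+ → ℝ_+ be a WSI function that is continuous on ℝ^N_+, define f_∞(x) = lim_{h→∞} f(hx)/h, and let x ∈ ℝ^N_+. Then f_∞(x) = lim_{n→∞} f(h_n x_n)/h_n for all sequences (x_n) ⊂ ℝ^N_+ and (h_n) ⊂ ℝ_{++} such that lim_{n→∞} x_n = x and lim_{n→∞} h_n = ∞. -/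
open Filter Topology

/-- If f is a WSI function continuous on the nonnegative orthant,
then for every x in the orthant and all sequences x_n → x (in the orthant) and
h_n → ∞ (with h_n > 0), one has f(h_n x_n)/h_n → f_∞(x). -/
theorem stmt6 {N : ℕ} (f : (Fin N → ℝ) → ℝ)
    (hnn : ∀ x : Fin N → ℝ, 0 ≤ x → 0 ≤ f x)
    (hmono : ∀ x y : Fin N → ℝ, 0 ≤ x → x ≤ y → f x ≤ f y)
    (hws : ∀ x : Fin N → ℝ, 0 ≤ x → ∀ α : ℝ, 1 ≤ α → f (α • x) ≤ α * f x)
    (hcont : ContinuousOn f {x : Fin N → ℝ | 0 ≤ x})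
    (F : (Fin N → ℝ) → ℝ)
    (hF : ∀ x : Fin N → ℝ, 0 ≤ x →
      Tendsto (fun h : ℝ => f (h • x) / h) atTop (nhds (F x)))
    (x : Fin N → ℝ) (hx : 0 ≤ x)
    (xn : ℕ → Fin N → ℝ) (hn : ℕ → ℝ)
    (hxn : ∀ n, 0 ≤ xn n) (hxnlim : Tendsto xn atTop (nhds x))
    (hhn : ∀ n, 0 < hn n) (hhnlim : Tendsto hn atTop atTop) :
    Tendsto (fun n => f (hn n • xn n) / hn n) atTop (nhds (F x)) := by
  have hF0 : 0 ≤ F x := ge_of_tendsto (hF x hx)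
    ((eventually_ge_atTop (1:ℝ)).mono fun h hh =>
      div_nonneg (hnn _ (smul_nonneg (by linarith) hx)) (by linarith))
  rw [tendsto_order]
  constructor
  · intro b hb
    set δ : ℝ := min (1/2) ((F x - b)/(2*(F x + 1))) with hδdef
    have hδpos : 0 < δ := lt_min (by norm_num) (div_pos (by linarith) (by linarith))
    have hδlt : δ < 1 := lt_of_le_of_lt (min_le_left _ _) (by norm_num)
    have hkey : b < (1-δ) * F x := by
      have h1 : δ * F x ≤ ((F x - b)/(2*(F x + 1))) * F x :=
        mul_le_mul_of_nonneg_right (min_le_right _ _) hF0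
      have h2 : ((F x - b)/(2*(F x + 1))) * F x < F x - b := by
        rw [div_mul_eq_mul_div, div_lt_iff₀ (by linarith)]
        nlinarith
      nlinarith
    have hmul : Tendsto (fun h : ℝ => h * (1-δ)) atTop atTop :=
      Tendsto.atTop_mul_const (by linarith) tendsto_id
    have T1 : Tendsto (fun h : ℝ => (1-δ) * (f ((h*(1-δ)) • x) / (h*(1-δ)))) atTop
        (nhds ((1-δ) * F x)) := ((hF x hx).comp hmul).const_mul _
    have T2 : Tendsto (fun h : ℝ => f (h • ((1-δ) • x)) / h) atTop (nhds ((1-δ) * F x)) := by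
      apply T1.congr'
      filter_upwards [eventually_gt_atTop (0:ℝ)] with h hh
      rw [smul_smul]
      generalize f ((h * (1-δ)) • x) = A
      have hne : h ≠ 0 := hh.ne'
      have hδne : (1:ℝ) - δ ≠ 0 := by linarith
      field_simp
    have T3 : Tendsto (fun n => f (hn n • ((1-δ) • x)) / hn n) atTop (nhds ((1-δ) * F x)) :=
      T2.comp hhnlim
    have E1 : ∀ᶠ n in atTop, b < f (hn n • ((1-δ) • x)) / hn n :=
      T3.eventually (eventually_gt_nhds hkey)
    have E2 : ∀ᶠ n in atTop, (1-δ) • x ≤ xn n := by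
      have : ∀ i, ∀ᶠ n in atTop, ((1-δ) • x) i ≤ xn n i := by
        intro i
        rcases eq_or_lt_of_le (hx i) with h0 | h0
        · exact Eventually.of_forall fun n => by
            simp [Pi.smul_apply, ← h0]; exact (hxn n i)
        · simp only [Pi.zero_apply] at h0
          have hti : Tendsto (fun n => xn n i) atTop (nhds (x i)) :=
            (tendsto_pi_nhds.mp hxnlim) i
          have : (1-δ) * x i < x i := by nlinarith
          exact (hti.eventually (eventually_gt_nhds this)).mono fun n h => le_of_lt h
      exact (eventually_all.2 this).mono fun n h i => h i
    filter_upwards [E1, E2] with n h1 h2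
    refine lt_of_lt_of_le h1 ?_
    have hle : f (hn n • ((1-δ) • x)) ≤ f (hn n • xn n) :=
      hmono _ _ (smul_nonneg (hhn n).le (smul_nonneg (by linarith) hx))
        (smul_le_smul_of_nonneg_left h2 (hhn n).le)
    exact div_le_div_of_nonneg_right hle (hhn n).le
  · intro b hb
    obtain ⟨h₀, hh₀lt, hh₀1⟩ :
        ∃ h₀ : ℝ, f (h₀ • x) / h₀ < (F x + b)/2 ∧ 1 ≤ h₀ := by
      have := ((hF x hx).eventually
        (eventually_lt_nhds (show F x < (F x + b)/2 by linarith))).and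
        (eventually_ge_atTop (1:ℝ))
      exact this.exists
    have h₀pos : (0:ℝ) < h₀ := by linarith
    have hcx : Tendsto (fun n => f (h₀ • xn n) / h₀) atTop (nhds (f (h₀ • x) / h₀)) := by
      have ht : Tendsto (fun n => h₀ • xn n) atTop (𝓝[{y : Fin N → ℝ | 0 ≤ y}] (h₀ • x)) :=
        tendsto_nhdsWithin_of_tendsto_nhds_of_eventually_within _
          (hxnlim.const_smul h₀)
          (Eventually.of_forall fun n => smul_nonneg h₀pos.le (hxn n))
      exact ((hcont _ (smul_nonneg h₀pos.le hx)).tendsto.comp ht).div_const h₀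
    have E1 : ∀ᶠ n in atTop, f (h₀ • xn n) / h₀ < b :=
      hcx.eventually (eventually_lt_nhds (by linarith))
    have E2 : ∀ᶠ n in atTop, h₀ ≤ hn n := hhnlim.eventually_ge_atTop h₀
    filter_upwards [E1, E2] with n h1 h2
    refine lt_of_le_of_lt ?_ h1
    have hα : (1:ℝ) ≤ hn n / h₀ := (one_le_div h₀pos).2 h2
    have hsc := hws (h₀ • xn n) (smul_nonneg h₀pos.le (hxn n)) (hn n / h₀) hα
    have heq : (hn n / h₀) • (h₀ • xn n) = hn n • xn n := by
      rw [smul_smul, div_mul_cancel₀ _ h₀pos.ne']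
    rw [heq] at hsc
    rw [div_le_div_iff₀ (hhn n) h₀pos]
    calc f (hn n • xn n) * h₀ ≤ (hn n / h₀ * f (h₀ • xn n)) * h₀ :=
          mul_le_mul_of_nonneg_right hsc h₀pos.le
      _ = f (h₀ • xn n) * hn n := by field_simp
end

section
/- Let T : ℝ^N_+ → ℝ^N_{++} be a continuous SI mapping and ‖·‖ a monotone norm on ℝ^N. Suppose (x⋆, λ⋆) ∈ ℝ^N_{++} × ℝ_{++} satisfies T(x⋆) = λ⋆ x⋆ and ‖x⋆‖ = 1, and suppose (x′, λ′) ∈ ℝ^N_+ × ℝ_+ satisfies T(x′) ≥ λ′ x′ (coordinatewise) and ‖x′‖ = 1. Then λ⋆ ≥ λ′. -/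
open Filter Topology

/-- For a continuous SI mapping T and a monotone norm ν, if
(x⋆, λ⋆) is a positive normalized eigenpair of T and (x′, λ′) is a normalized
pair with T(x′) ≥ λ′ x′, then λ⋆ ≥ λ′. -/
theorem stmt9 {N : ℕ} (T : (Fin N → ℝ) → (Fin N → ℝ))
    (hpos : ∀ x : Fin N → ℝ, 0 ≤ x → ∀ i, 0 < T x i)
    (hmono : ∀ x y : Fin N → ℝ, 0 ≤ x → x ≤ y → T x ≤ T y)
    (hscal : ∀ x : Fin N → ℝ, 0 ≤ x → ∀ α : ℝ, 1 < α → ∀ i, T (α • x) i < α * T x i)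
    (hcont : ContinuousOn T {x : Fin N → ℝ | 0 ≤ x})
    (ν : (Fin N → ℝ) → ℝ)
    (hν0 : ∀ x, ν x = 0 ↔ x = 0)
    (hνs : ∀ (a : ℝ) (x : Fin N → ℝ), ν (a • x) = |a| * ν x)
    (hνt : ∀ x y : Fin N → ℝ, ν (x + y) ≤ ν x + ν y)
    (hνm : ∀ x y : Fin N → ℝ, 0 ≤ x → x ≤ y → ν x ≤ ν y)
    (xs : Fin N → ℝ) (lams : ℝ) (hxs : ∀ i, 0 < xs i) (hlams : 0 < lams)
    (heig : T xs = lams • xs) (hns : ν xs = 1)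
    (x' : Fin N → ℝ) (lam' : ℝ) (hx' : 0 ≤ x') (hlam' : 0 ≤ lam')
    (hineq : lam' • x' ≤ T x') (hn' : ν x' = 1) :
    lam' ≤ lams := by
  -- x' ≠ 0
  have hx'ne : x' ≠ 0 := by
    intro h
    rw [h] at hn'
    rw [(hν0 0).mpr rfl] at hn'
    norm_num at hn'
  -- the support of x' is nonempty
  have hS : (Finset.univ.filter (fun i => 0 < x' i)).Nonempty := by
    obtain ⟨i, hi⟩ := Function.ne_iff.mp hx'ne
    exact ⟨i, Finset.mem_filter.mpr ⟨Finset.mem_univ _, lt_of_le_of_ne (hx' i) (Ne.symm hi)⟩⟩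
  obtain ⟨i₀, hi₀mem, hi₀min⟩ := Finset.exists_min_image (f := fun i => xs i / x' i) _ hS
  have hxi₀ : 0 < x' i₀ := (Finset.mem_filter.mp hi₀mem).2
  set c : ℝ := xs i₀ / x' i₀ with hc
  have hcpos : 0 < c := div_pos (hxs i₀) hxi₀
  have hcx : c • x' ≤ xs := by
    intro i
    by_cases hi : 0 < x' i
    · have := hi₀min i (Finset.mem_filter.mpr ⟨Finset.mem_univ _, hi⟩)
      have : c * x' i ≤ (xs i / x' i) * x' i := by
        exact mul_le_mul_of_nonneg_right this (le_of_lt hi)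
      simpa [div_mul_cancel₀ _ (ne_of_gt hi)] using this
    · have : x' i = 0 := le_antisymm (not_lt.mp hi) (hx' i)
      simp [this, le_of_lt (hxs i)]
  have hci₀ : c * x' i₀ = xs i₀ := div_mul_cancel₀ _ (ne_of_gt hxi₀)
  -- c ≤ 1
  have hc1 : c ≤ 1 := by
    by_contra h
    push_neg at h
    have hle : x' ≤ c⁻¹ • xs := by
      intro i
      have := hcx i
      have h2 : c * x' i ≤ xs i := this
      have : x' i ≤ c⁻¹ * xs i := by
        rw [le_inv_mul_iff₀ hcpos]
        linarith
      simpa using this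
    have := hνm x' (c⁻¹ • xs) hx' hle
    rw [hn', hνs, hns, abs_of_pos (inv_pos.mpr hcpos), mul_one] at this
    have : (1 : ℝ) < 1 := lt_of_le_of_lt this (by
      rw [inv_lt_one_iff₀]; right; exact h)
    exact lt_irrefl _ this
  -- T (c • x') ≥ c • T x'
  have hkey : ∀ i, c * T x' i ≤ T (c • x') i := by
    intro i
    rcases eq_or_lt_of_le hc1 with h1 | h1
    · rw [h1]; simp
    · have hcx0 : (0 : Fin N → ℝ) ≤ c • x' := by
        intro j; exact mul_nonneg (le_of_lt hcpos) (hx' j)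
      have hα : 1 < c⁻¹ := (one_lt_inv₀ hcpos).mpr h1
      have := hscal (c • x') hcx0 c⁻¹ hα i
      rw [smul_smul, inv_mul_cancel₀ (ne_of_gt hcpos), one_smul] at this
      have h2 : c * T x' i < c * (c⁻¹ * T (c • x') i) :=
        mul_lt_mul_of_pos_left this hcpos
      rw [← mul_assoc, mul_inv_cancel₀ (ne_of_gt hcpos), one_mul] at h2
      exact le_of_lt h2
  -- chain at i₀
  have hcx0 : (0 : Fin N → ℝ) ≤ c • x' := by
    intro j; exact mul_nonneg (le_of_lt hcpos) (hx' j)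
  have hchain : lam' * xs i₀ ≤ lams * xs i₀ := by
    calc lam' * xs i₀ = c * (lam' * x' i₀) := by rw [← hci₀]; ring
    _ ≤ c * T x' i₀ := by
        have := hineq i₀
        exact mul_le_mul_of_nonneg_left this (le_of_lt hcpos)
    _ ≤ T (c • x') i₀ := hkey i₀
    _ ≤ T xs i₀ := hmono _ _ hcx0 hcx i₀
    _ = lams * xs i₀ := by rw [heig]; rfl
  exact le_of_mul_le_mul_right hchain (hxs i₀)
end

section
/- Let T : ℝ^N_+ → ℝ^N_{++} be a continuous SI mapping, and let ‖·‖_a and ‖·‖_b be monotone norms on ℝ^N. Let p̄₁ > p̄₂ > 0, and suppose (p₁, u₁), (p₂, u₂) ∈ ℝ^N_{++} × ℝ_{++} satisfy pᵢ = uᵢ T(pᵢ) and ‖pᵢ‖_a = p̄ᵢ for i = 1, 2. Then the ‖·‖_b-efficiencies satisfy u₁/‖p₁‖_b ≤ u₂/‖p₂‖_b; equivalently, ‖T(p₁)‖_b ≥ ‖T(p₂)‖_b (note uᵢ/‖pᵢ‖_b = 1/‖T(pᵢ)‖_b). -/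
open Filter Topology

lemma stmt10_key {N : ℕ} (T : (Fin N → ℝ) → (Fin N → ℝ))
    (hmono : ∀ x y : Fin N → ℝ, 0 ≤ x → x ≤ y → T x ≤ T y)
    (hscal : ∀ x : Fin N → ℝ, 0 ≤ x → ∀ α : ℝ, 1 < α → ∀ i, T (α • x) i < α * T x i)
    (p q : Fin N → ℝ) (u v : ℝ)
    (hp : ∀ i, 0 < p i) (hq : ∀ i, 0 < q i) (hu : 0 < u) (hv : 0 < v)
    (hfp : p = u • T p) (hfq : q = v • T q)
    (hne : ¬ q ≤ p) : u < v := by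
  rw [Pi.le_def] at hne
  push_neg at hne
  obtain ⟨i₀, hi₀⟩ := hne
  have hnu : (Finset.univ : Finset (Fin N)).Nonempty := ⟨i₀, Finset.mem_univ _⟩
  set β := Finset.univ.sup' hnu (fun i => q i / p i) with hβ
  have hβ1 : 1 < β := by
    refine lt_of_lt_of_le ?_ (Finset.le_sup' (fun i => q i / p i) (Finset.mem_univ i₀))
    exact (one_lt_div (hp i₀)).2 hi₀
  have hle : q ≤ β • p := by
    intro i
    have h := Finset.le_sup' (fun i => q i / p i) (Finset.mem_univ i)
    rw [← hβ] at h
    have := (div_le_iff₀ (hp i)).1 h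
    simpa [mul_comm] using this
  obtain ⟨j, _, hj⟩ := Finset.exists_mem_eq_sup' hnu (fun i => q i / p i)
  have hqj : q j = β * p j := by
    rw [hβ, hj, div_mul_cancel₀ _ (hp j).ne']
  have h1 : T q j ≤ T (β • p) j := hmono q (β • p) (fun i => (hq i).le) hle j
  have h2 : T (β • p) j < β * T p j := hscal p (fun i => (hp i).le) β hβ1 j
  have hpj : p j = u * T p j := congrFun hfp j
  have hqj' : q j = v * T q j := congrFun hfq j
  have hchain : q j < (v / u) * q j := by
    have : q j < v * (β * T p j) := by
      calc q j = v * T q j := hqj'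
        _ ≤ v * T (β • p) j := mul_le_mul_of_nonneg_left h1 hv.le
        _ < v * (β * T p j) := mul_lt_mul_of_pos_left h2 hv
    have heq : v * (β * T p j) = (v / u) * q j := by
      rw [hqj, hpj]
      field_simp
    linarith [heq ▸ this]
  have : 1 < v / u := (lt_mul_iff_one_lt_left (hq j)).1 hchain
  exact (one_lt_div hu).1 this

/-- The ‖·‖_b-efficiency of solutions to the canonical max-min
utility problem is nonincreasing in the budget. -/
theorem stmt10 {N : ℕ} (T : (Fin N → ℝ) → (Fin N → ℝ))
    (hpos : ∀ x : Fin N → ℝ, 0 ≤ x → ∀ i, 0 < T x i)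
    (hmono : ∀ x y : Fin N → ℝ, 0 ≤ x → x ≤ y → T x ≤ T y)
    (hscal : ∀ x : Fin N → ℝ, 0 ≤ x → ∀ α : ℝ, 1 < α → ∀ i, T (α • x) i < α * T x i)
    (hcont : ContinuousOn T {x : Fin N → ℝ | 0 ≤ x})
    (νa νb : (Fin N → ℝ) → ℝ)
    (hνa0 : ∀ x, νa x = 0 ↔ x = 0)
    (hνas : ∀ (a : ℝ) (x : Fin N → ℝ), νa (a • x) = |a| * νa x)
    (hνat : ∀ x y : Fin N → ℝ, νa (x + y) ≤ νa x + νa y)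
    (hνam : ∀ x y : Fin N → ℝ, 0 ≤ x → x ≤ y → νa x ≤ νa y)
    (hνb0 : ∀ x, νb x = 0 ↔ x = 0)
    (hνbs : ∀ (a : ℝ) (x : Fin N → ℝ), νb (a • x) = |a| * νb x)
    (hνbt : ∀ x y : Fin N → ℝ, νb (x + y) ≤ νb x + νb y)
    (hνbm : ∀ x y : Fin N → ℝ, 0 ≤ x → x ≤ y → νb x ≤ νb y)
    (pbar₁ pbar₂ : ℝ) (h21 : pbar₂ < pbar₁) (h2 : 0 < pbar₂)
    (p₁ p₂ : Fin N → ℝ) (u₁ u₂ : ℝ)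
    (hp₁ : ∀ i, 0 < p₁ i) (hp₂ : ∀ i, 0 < p₂ i) (hu₁ : 0 < u₁) (hu₂ : 0 < u₂)
    (hfix₁ : p₁ = u₁ • T p₁) (hfix₂ : p₂ = u₂ • T p₂)
    (hna₁ : νa p₁ = pbar₁) (hna₂ : νa p₂ = pbar₂) :
    u₁ / νb p₁ ≤ u₂ / νb p₂ ∧ νb (T p₂) ≤ νb (T p₁) := by
  have hp₁0 : (0 : Fin N → ℝ) ≤ p₁ := fun i => (hp₁ i).le
  have hp₂0 : (0 : Fin N → ℝ) ≤ p₂ := fun i => (hp₂ i).le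
  -- p₁ ≤ p₂ is impossible since νa p₂ < νa p₁
  have h12 : ¬ p₁ ≤ p₂ := by
    intro h
    exact absurd ((hνam p₁ p₂ hp₁0 h).trans_eq hna₂) (hna₁ ▸ not_le.2 h21)
  have hA : u₂ < u₁ := stmt10_key T hmono hscal p₂ p₁ u₂ u₁ hp₂ hp₁ hu₂ hu₁ hfix₂ hfix₁ h12
  have h21le : p₂ ≤ p₁ := by
    by_contra h
    exact absurd (stmt10_key T hmono hscal p₁ p₂ u₁ u₂ hp₁ hp₂ hu₁ hu₂ hfix₁ hfix₂ h) hA.asymm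
  clear h12
  have hTle : T p₂ ≤ T p₁ := hmono p₂ p₁ hp₂0 h21le
  have hb : νb (T p₂) ≤ νb (T p₁) :=
    hνbm _ _ (fun i => (hpos p₂ hp₂0 i).le) hTle
  -- νb is nonnegative
  have hbn : ∀ x, 0 ≤ νb x := by
    intro x
    have h0 : νb 0 = 0 := (hνb0 0).2 rfl
    have ht := hνbt x (-x)
    have hs : νb (-x) = νb x := by
      have := hνbs (-1) x
      simpa using this
    rw [add_neg_cancel, h0, hs] at ht
    linarith
  -- relate νb pᵢ and νb (T pᵢ)
  have he₁ : νb p₁ = u₁ * νb (T p₁) := by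
    conv_lhs => rw [hfix₁]
    rw [hνbs, abs_of_pos hu₁]
  have he₂ : νb p₂ = u₂ * νb (T p₂) := by
    conv_lhs => rw [hfix₂]
    rw [hνbs, abs_of_pos hu₂]
  have hp₂ne : p₂ ≠ 0 := by
    intro h
    have := (hνa0 p₂).2 h
    rw [hna₂] at this
    exact absurd this h2.ne'
  have hp₁ne : p₁ ≠ 0 := by
    intro h
    have := (hνa0 p₁).2 h
    rw [hna₁] at this
    exact absurd this (by linarith)
  have hbp₁ : 0 < νb p₁ := (hbn p₁).lt_of_ne (fun h => hp₁ne ((hνb0 p₁).1 h.symm))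
  have hbp₂ : 0 < νb p₂ := (hbn p₂).lt_of_ne (fun h => hp₂ne ((hνb0 p₂).1 h.symm))
  have hB₁ : 0 < νb (T p₁) := by nlinarith
  have hB₂ : 0 < νb (T p₂) := by nlinarith
  constructor
  · rw [he₁, he₂]
    rw [div_le_div_iff₀ (by positivity) (by positivity)]
    nlinarith [mul_le_mul_of_nonneg_left hb (mul_pos hu₁ hu₂).le]
  · exact hb
end

section
/- Let T : ℝ^N_+ → ℝ^N_{++} be a continuous SI mapping, ‖·‖_a a monotone norm on ℝ^N, and T_∞ its asymptotic mapping. Let (p̄_n) ⊂ ℝ_{++} be a strictly increasing sequence with p̄_n → ∞, and for each n let (p_n, λ_n) ∈ ℝ^N_{++} × ℝ_{++} satisfy T(p_n) = λ_n p_n and ‖p_n‖_a = p̄_n. Assume λ_n → λ_∞. Set x_n := p_n/p̄_n, so ‖x_n‖_a = 1. Then the sequence (x_n) is bounded, and every accumulation point x_∞ ∈ ℝ^N_+ of (x_n) satisfies T_∞(x_∞) = λ_∞ x_∞ and ‖x_∞‖_a = 1; i.e., (x_∞, λ_∞) solves the conditional eigenvalue problem for T_∞. Moreover, if (x′, λ′)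 is the unique pair in ℝ^N_+ × ℝ_+ with T_∞(x′) = λ′x′ and ‖x′‖_a = 1, then x_n → x′ and λ_∞ = λ′. -/
open Filter Topology

/-- Normalized solutions of the conditional eigenvalue problems
for a continuous SI mapping T with budgets p̄_n → ∞ accumulate at solutions of
the conditional eigenvalue problem for the asymptotic mapping T_∞; under
uniqueness of the latter, the whole sequence converges. -/
theorem stmt11 {N : ℕ} (T : (Fin N → ℝ) → (Fin N → ℝ))
    (hpos : ∀ x : Fin N → ℝ, 0 ≤ x → ∀ i, 0 < T x i)
    (hmono : ∀ x y : Fin N → ℝ, 0 ≤ x → x ≤ y → T x ≤ T y)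
    (hscal : ∀ x : Fin N → ℝ, 0 ≤ x → ∀ α : ℝ, 1 < α → ∀ i, T (α • x) i < α * T x i)
    (hcont : ContinuousOn T {x : Fin N → ℝ | 0 ≤ x})
    (νa : (Fin N → ℝ) → ℝ)
    (hνa0 : ∀ x, νa x = 0 ↔ x = 0)
    (hνas : ∀ (a : ℝ) (x : Fin N → ℝ), νa (a • x) = |a| * νa x)
    (hνat : ∀ x y : Fin N → ℝ, νa (x + y) ≤ νa x + νa y)
    (hνam : ∀ x y : Fin N → ℝ, 0 ≤ x → x ≤ y → νa x ≤ νa y)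
    (Tinf : (Fin N → ℝ) → (Fin N → ℝ))
    (hTinf : ∀ x : Fin N → ℝ, 0 ≤ x → ∀ i,
      Tendsto (fun h : ℝ => T (h • x) i / h) atTop (nhds (Tinf x i)))
    (pbar : ℕ → ℝ) (hpbar_pos : ∀ n, 0 < pbar n) (hpbar_mono : StrictMono pbar)
    (hpbar_lim : Tendsto pbar atTop atTop)
    (p : ℕ → Fin N → ℝ) (lam : ℕ → ℝ)
    (hp_pos : ∀ n i, 0 < p n i) (hlam_pos : ∀ n, 0 < lam n)
    (heig : ∀ n, T (p n) = lam n • p n) (hnorm : ∀ n, νa (p n) = pbar n)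
    (laminf : ℝ) (hlam_lim : Tendsto lam atTop (nhds laminf))
    (x : ℕ → Fin N → ℝ) (hx : ∀ n, x n = (pbar n)⁻¹ • p n)
    (x' : Fin N → ℝ) (lam' : ℝ) :
    (∃ C : ℝ, ∀ n, ‖x n‖ ≤ C) ∧
    (∀ xinf : Fin N → ℝ, 0 ≤ xinf → MapClusterPt xinf atTop x →
      Tinf xinf = laminf • xinf ∧ νa xinf = 1) ∧
    ((0 ≤ x' ∧ 0 ≤ lam' ∧ Tinf x' = lam' • x' ∧ νa x' = 1) →
      (∀ (y : Fin N → ℝ) (μ : ℝ),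
        0 ≤ y → 0 ≤ μ → Tinf y = μ • y → νa y = 1 → y = x' ∧ μ = lam') →
      Tendsto x atTop (nhds x') ∧ laminf = lam') := by
  -- basic facts about νa
  have hνazero : νa 0 = 0 := (hνa0 0).mpr rfl
  have hνann : ∀ v, 0 ≤ νa v := by
    intro v
    have h1 := hνat v (-v)
    have h2 : νa (-v) = νa v := by
      have := hνas (-1) v
      simpa using this
    simp only [add_neg_cancel, hνazero, h2] at h1
    linarith
  have hei_pos : ∀ i : Fin N, 0 < νa (Pi.single i (1:ℝ)) := by
    intro i
    rcases (hνann (Pi.single i 1)).eq_or_lt with h | h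
    · exfalso
      have : Pi.single i (1:ℝ) = 0 := (hνa0 _).mp h.symm
      have := congrFun this i
      simp at this
    · exact h
  set C0 : ℝ := ∑ j : Fin N, νa (Pi.single j (1:ℝ)) with hC0
  have hsub : ∀ v : Fin N → ℝ, νa v ≤ ∑ j : Fin N, |v j| * νa (Pi.single j (1:ℝ)) := by
    intro v
    have hdecomp : v = ∑ j : Fin N, Pi.single j (v j) := (Finset.univ_sum_single v).symm
    calc νa v = νa (∑ j : Fin N, Pi.single j (v j)) := by rw [← hdecomp]
      _ ≤ ∑ j : Fin N, νa (Pi.single j (v j)) :=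
          Finset.le_sum_of_subadditive νa hνazero.le hνat _ _
      _ = ∑ j : Fin N, |v j| * νa (Pi.single j (1:ℝ)) := by
          refine Finset.sum_congr rfl fun j _ => ?_
          have : Pi.single j (v j) = (v j) • (Pi.single j (1:ℝ) : Fin N → ℝ) := by
            ext k
            by_cases hk : k = j <;> simp [Pi.single_apply, hk]
          rw [this, hνas]
  have hνalip : ∀ a b : Fin N → ℝ, |νa a - νa b| ≤ C0 * ‖a - b‖ := by
    intro a b
    have hd : ∀ u w : Fin N → ℝ, νa u - νa w ≤ νa (u - w) := by
      intro u w
      have := hνat w (u - w)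
      simp only [add_sub_cancel] at this
      linarith
    have hsymm : νa (b - a) = νa (a - b) := by
      have h : b - a = (-1 : ℝ) • (a - b) := by rw [neg_one_smul]; exact (neg_sub a b).symm
      rw [h, hνas]; simp
    have hbound : νa (a - b) ≤ C0 * ‖a - b‖ := by
      calc νa (a - b) ≤ ∑ j : Fin N, |(a - b) j| * νa (Pi.single j (1:ℝ)) := hsub _
        _ ≤ ∑ j : Fin N, ‖a - b‖ * νa (Pi.single j (1:ℝ)) := by
            refine Finset.sum_le_sum fun j _ => ?_
            refine mul_le_mul_of_nonneg_right ?_ (hνann _)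
            simpa [Real.norm_eq_abs] using norm_le_pi_norm (a - b) j
        _ = C0 * ‖a - b‖ := by simp [hC0, Finset.sum_mul, mul_comm]
    rw [abs_sub_le_iff]
    constructor
    · exact le_trans (hd a b) hbound
    · exact le_trans (hd b a) (by rw [hsymm]; exact hbound)
  have hνacont : Continuous νa := by
    have hC0nn : 0 ≤ C0 := Finset.sum_nonneg fun j _ => hνann _
    refine Metric.continuous_iff.2 fun b ε hε => ?_
    refine ⟨ε / (C0 + 1), by positivity, fun a ha => ?_⟩
    have h1 : dist (νa a) (νa b) ≤ C0 * ‖a - b‖ := by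
      rw [Real.dist_eq]; exact hνalip a b
    have h2 : ‖a - b‖ = dist a b := (dist_eq_norm a b).symm
    calc dist (νa a) (νa b) ≤ C0 * dist a b := by rw [← h2]; exact h1
      _ ≤ (C0 + 1) * dist a b := by nlinarith [dist_nonneg (x := a) (y := b)]
      _ < (C0 + 1) * (ε / (C0 + 1)) := by
          refine mul_lt_mul_of_pos_left ha (by positivity)
      _ = ε := by field_simp
  -- facts about x
  have hxpos : ∀ n i, 0 < x n i := by
    intro n i
    rw [hx n]
    exact mul_pos (inv_pos.2 (hpbar_pos n)) (hp_pos n i)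
  have hxnn : ∀ n, (0 : Fin N → ℝ) ≤ x n := fun n i => (hxpos n i).le
  have hνax : ∀ n, νa (x n) = 1 := by
    intro n
    rw [hx n, hνas, hnorm, abs_of_pos (inv_pos.2 (hpbar_pos n)),
      inv_mul_cancel₀ (hpbar_pos n).ne']
  set C : ℝ := ∑ j : Fin N, (νa (Pi.single j (1:ℝ)))⁻¹ with hCdef
  have hCnn : 0 ≤ C := Finset.sum_nonneg fun j _ => (inv_pos.2 (hei_pos j)).le
  have hnormbd : ∀ v : Fin N → ℝ, 0 ≤ v → νa v = 1 → ∀ i, v i ≤ C := by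
    intro v hv hv1 i
    have hle : (v i) • (Pi.single i (1:ℝ) : Fin N → ℝ) ≤ v := by
      intro k
      by_cases hk : k = i
      · subst hk; simp
      · simp [Pi.single_apply, hk]; exact hv k
    have h0le : (0 : Fin N → ℝ) ≤ (v i) • (Pi.single i (1:ℝ) : Fin N → ℝ) := by
      intro k
      by_cases hk : k = i
      · subst hk; simpa using mul_nonneg (hv k) zero_le_one
      · simp [Pi.single_apply, hk]
    have h1 : νa ((v i) • (Pi.single i (1:ℝ) : Fin N → ℝ)) ≤ νa v := hνam _ v h0le hle
    rw [hνas, abs_of_nonneg (hv i), hv1] at h1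
    have h2 : v i ≤ (νa (Pi.single i (1:ℝ)))⁻¹ := by
      rw [← one_div, le_div_iff₀ (hei_pos i)]
      exact h1
    refine le_trans h2 ?_
    exact Finset.single_le_sum (fun j _ => (inv_pos.2 (hei_pos j)).le) (Finset.mem_univ i)
  have hxC : ∀ n i, x n i ≤ C := fun n i => hnormbd (x n) (hxnn n) (hνax n) i
  have part1 : ∃ D : ℝ, ∀ n, ‖x n‖ ≤ D := by
    refine ⟨C, fun n => ?_⟩
    rw [pi_norm_le_iff_of_nonneg hCnn]
    intro i
    rw [Real.norm_eq_abs, abs_of_pos (hxpos n i)]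
    exact hxC n i
  -- helper: smul monotone
  have hsmul_le : ∀ (t : ℝ), 0 ≤ t → ∀ u v : Fin N → ℝ, u ≤ v → t • u ≤ t • v := by
    intro t ht u v huv j
    simpa using mul_le_mul_of_nonneg_left (huv j) ht
  have hsmul_nn : ∀ (t : ℝ), 0 ≤ t → ∀ u : Fin N → ℝ, 0 ≤ u → (0:Fin N → ℝ) ≤ t • u := by
    intro t ht u hu j
    simpa using mul_nonneg ht (hu j)
  -- key monotonicity in h
  have hdec : ∀ z : Fin N → ℝ, 0 ≤ z → ∀ i, ∀ h h' : ℝ, 0 < h → h ≤ h' →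
      T (h' • z) i / h' ≤ T (h • z) i / h := by
    intro z hz i h h' hh hle
    rcases eq_or_lt_of_le hle with rfl | hlt
    · exact le_refl _
    · have hh' : 0 < h' := lt_trans hh hlt
      have hα : 1 < h' / h := (one_lt_div hh).2 hlt
      have hs := hscal (h • z) (hsmul_nn h hh.le z hz) (h' / h) hα i
      rw [smul_smul, div_mul_cancel₀ _ hh.ne'] at hs
      rw [div_le_div_iff₀ hh' hh]
      have hq : h' / h * T (h • z) i * h = T (h • z) i * h' := by
        field_simp
      nlinarith [mul_lt_mul_of_pos_right hs hh, hq]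
  have hTinfLe : ∀ z : Fin N → ℝ, 0 ≤ z → ∀ i, ∀ h : ℝ, 0 < h →
      Tinf z i ≤ T (h • z) i / h := by
    intro z hz i h hh
    refine le_of_tendsto (hTinf z hz i) ?_
    filter_upwards [eventually_ge_atTop h] with h' hh'
    exact hdec z hz i h h' hh hh'
  have hTinfNN : ∀ z : Fin N → ℝ, 0 ≤ z → ∀ i, 0 ≤ Tinf z i := by
    intro z hz i
    refine ge_of_tendsto (hTinf z hz i) ?_
    filter_upwards [eventually_ge_atTop (1:ℝ)] with h hh
    have h0 : (0:ℝ) < h := lt_of_lt_of_le one_pos hh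
    exact div_nonneg (hpos _ (hsmul_nn h h0.le z hz) i).le h0.le
  have hTinfHom : ∀ z : Fin N → ℝ, 0 ≤ z → ∀ c : ℝ, 0 < c → ∀ i,
      Tinf (c • z) i = c * Tinf z i := by
    intro z hz c hc i
    have h1 := hTinf (c • z) (hsmul_nn c hc.le z hz) i
    have hmul : Tendsto (fun h : ℝ => h * c) atTop atTop :=
      Tendsto.atTop_mul_const hc tendsto_id
    have h2 : Tendsto (fun h : ℝ => c * (T ((h * c) • z) i / (h * c))) atTop
        (nhds (c * Tinf z i)) :=
      tendsto_const_nhds.mul ((hTinf z hz i).comp hmul)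
    have heq : ∀ᶠ h : ℝ in atTop,
        c * (T ((h * c) • z) i / (h * c)) = T (h • (c • z)) i / h := by
      filter_upwards [eventually_gt_atTop (0:ℝ)] with h hh
      rw [smul_smul, eq_div_iff hh.ne']
      field_simp
    exact tendsto_nhds_unique h1 (h2.congr' heq)
  -- the key lemma about subsequential limits
  have hpx : ∀ n, pbar n • x n = p n := by
    intro n
    rw [hx n, smul_smul, mul_inv_cancel₀ (hpbar_pos n).ne', one_smul]
  have hkey : ∀ φ : ℕ → ℕ, Tendsto φ atTop atTop → ∀ xinf : Fin N → ℝ, 0 ≤ xinf →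
      Tendsto (fun k => x (φ k)) atTop (nhds xinf) →
      Tinf xinf = laminf • xinf ∧ νa xinf = 1 := by
    intro φ hφ xinf hxinf hconv
    have hb : Tendsto (fun k => pbar (φ k)) atTop atTop := hpbar_lim.comp hφ
    have hxconv : ∀ j, Tendsto (fun k => x (φ k) j) atTop (nhds (xinf j)) := by
      intro j
      exact (tendsto_pi_nhds.1 hconv) j
    have hlimT : ∀ i, Tendsto (fun k => T (pbar (φ k) • x (φ k)) i / pbar (φ k))
        atTop (nhds (Tinf xinf i)) := by
      intro i
      rw [tendsto_order]
      constructor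
      · -- lower bound
        intro c hc
        set L := Tinf xinf i with hLdef
        have hL0 : 0 ≤ L := hTinfNN xinf hxinf i
        set δ : ℝ := (1/2) * min 1 ((L - c) / (L + 1)) with hδdef
        have hLc : 0 < L - c := sub_pos.2 hc
        have hL1 : 0 < L + 1 := by linarith
        have hδpos : 0 < δ := by
          apply mul_pos (by norm_num)
          exact lt_min one_pos (div_pos hLc hL1)
        have hδhalf : δ ≤ 1/2 := by
          rw [hδdef]
          nlinarith [min_le_left (1:ℝ) ((L - c) / (L + 1))]
        have h1δ : (0:ℝ) < 1 - δ := by linarith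
        have hδL1 : δ * (L + 1) ≤ (L - c) / 2 := by
          have hm : min 1 ((L - c) / (L + 1)) ≤ (L - c) / (L + 1) := min_le_right _ _
          have : δ ≤ (1/2) * ((L - c) / (L + 1)) := by
            rw [hδdef]
            nlinarith
          calc δ * (L + 1) ≤ (1/2) * ((L - c) / (L + 1)) * (L + 1) :=
                mul_le_mul_of_nonneg_right this hL1.le
            _ = (L - c) / 2 := by field_simp
        have hcδ : c < (1 - δ) * L := by
          have h3 : δ * L ≤ δ * (L + 1) := by nlinarith [hδpos.le]
          nlinarith
        have heve : ∀ᶠ k in atTop, (1 - δ) • xinf ≤ x (φ k) := by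
          have hall : ∀ j, ∀ᶠ k in atTop, ((1 - δ) • xinf) j ≤ x (φ k) j := by
            intro j
            rcases (hxinf j).eq_or_lt with hj | hj
            · filter_upwards with k
              have hrw : ((1 - δ) • xinf) j = (1 - δ) * xinf j := rfl
              rw [hrw, ← hj]
              simpa using (hxpos _ j).le
            · have hlt : (1 - δ) * xinf j < xinf j := by nlinarith [mul_pos hδpos hj]
              filter_upwards [(hxconv j).eventually (eventually_gt_nhds hlt)] with k hk
              simpa using hk.le
          exact (eventually_all.2 hall).mono fun k hk j => hk j
        filter_upwards [heve] with k hk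
        have hpb := hpbar_pos (φ k)
        calc c < (1 - δ) * L := hcδ
          _ = Tinf ((1 - δ) • xinf) i := (hTinfHom xinf hxinf (1 - δ) h1δ i).symm
          _ ≤ T (pbar (φ k) • ((1 - δ) • xinf)) i / pbar (φ k) :=
              hTinfLe _ (hsmul_nn _ h1δ.le _ hxinf) i _ hpb
          _ ≤ T (pbar (φ k) • x (φ k)) i / pbar (φ k) := by
              gcongr
              exact (hmono _ _ (hsmul_nn _ hpb.le _ (hsmul_nn _ h1δ.le _ hxinf))
                (hsmul_le _ hpb.le _ _ hk)) i
      · -- upper bound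
        intro c hc
        set L := Tinf xinf i with hLdef
        have hm : L < (L + c) / 2 := by linarith
        have hm2 : (L + c) / 2 < c := by linarith
        obtain ⟨h0, hh0m, hh01⟩ :=
          (((hTinf xinf hxinf i).eventually (eventually_lt_nhds hm)).and
            (eventually_ge_atTop (1:ℝ))).exists
        have h00 : (0:ℝ) < h0 := lt_of_lt_of_le one_pos hh01
        -- continuity step: find ε > 0
        have hmem : h0 • xinf ∈ {v : Fin N → ℝ | 0 ≤ v} := by
          exact hsmul_nn h0 h00.le xinf hxinf
        have hpath : Tendsto (fun ε : ℝ => h0 • (xinf + ε • (1 : Fin N → ℝ)))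
            (nhdsWithin 0 (Set.Ioi 0)) (nhdsWithin (h0 • xinf) {v : Fin N → ℝ | 0 ≤ v}) := by
          rw [tendsto_nhdsWithin_iff]
          constructor
          · have hcontm : Continuous (fun ε : ℝ => h0 • (xinf + ε • (1 : Fin N → ℝ))) :=
              by fun_prop
            have := hcontm.tendsto 0
            simp only [zero_smul, add_zero] at this
            exact this.mono_left nhdsWithin_le_nhds
          · filter_upwards [self_mem_nhdsWithin] with ε hε
            intro j
            simp only [Pi.smul_apply, Pi.add_apply, Pi.one_apply, smul_eq_mul, mul_one]
            have hε' : (0:ℝ) < ε := hε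
            nlinarith [hxinf j, mul_nonneg h00.le (hxinf j), mul_pos h00 hε']
        have hTc : Tendsto (fun ε : ℝ => T (h0 • (xinf + ε • (1 : Fin N → ℝ))) i / h0)
            (nhdsWithin 0 (Set.Ioi 0)) (nhds (T (h0 • xinf) i / h0)) := by
          have h1 : Tendsto (fun ε : ℝ => T (h0 • (xinf + ε • (1 : Fin N → ℝ))))
              (nhdsWithin 0 (Set.Ioi 0)) (nhds (T (h0 • xinf))) :=
            (hcont _ hmem).tendsto.comp hpath
          exact (((continuous_apply i).tendsto _).comp h1).div_const h0
        have hlt : T (h0 • xinf) i / h0 < c := lt_trans hh0m hm2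
        obtain ⟨ε, hεpos, hTε⟩ : ∃ ε : ℝ, 0 < ε ∧
            T (h0 • (xinf + ε • (1 : Fin N → ℝ))) i / h0 < c := by
          have := (hTc.eventually (eventually_lt_nhds hlt)).and self_mem_nhdsWithin
          obtain ⟨ε, h1, h2⟩ := this.exists
          exact ⟨ε, h2, h1⟩
        have hznn : (0:Fin N → ℝ) ≤ xinf + ε • (1 : Fin N → ℝ) := by
          intro j
          simp only [Pi.add_apply, Pi.smul_apply, Pi.one_apply, smul_eq_mul, mul_one, Pi.zero_apply]
          have := show (0:ℝ) ≤ xinf j from hxinf j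
          linarith
        have heve : ∀ᶠ k in atTop, x (φ k) ≤ xinf + ε • (1 : Fin N → ℝ) := by
          have hall : ∀ j, ∀ᶠ k in atTop, x (φ k) j ≤ (xinf + ε • (1 : Fin N → ℝ)) j := by
            intro j
            have hlt2 : xinf j < xinf j + ε := by linarith
            filter_upwards [(hxconv j).eventually (eventually_lt_nhds hlt2)] with k hk
            simpa using hk.le
          exact (eventually_all.2 hall).mono fun k hk j => hk j
        filter_upwards [heve, hb.eventually (eventually_ge_atTop h0)] with k hk1 hk2
        have hpb := hpbar_pos (φ k)
        calc T (pbar (φ k) • x (φ k)) i / pbar (φ k)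
            ≤ T (pbar (φ k) • (xinf + ε • (1 : Fin N → ℝ))) i / pbar (φ k) := by
              gcongr
              exact (hmono _ _ (hsmul_nn _ hpb.le _ (hxnn _))
                (hsmul_le _ hpb.le _ _ hk1)) i
          _ ≤ T (h0 • (xinf + ε • (1 : Fin N → ℝ))) i / h0 :=
              hdec _ hznn i h0 (pbar (φ k)) h00 hk2
          _ < c := hTε
    have hptwise : ∀ i k, lam (φ k) * x (φ k) i = T (pbar (φ k) • x (φ k)) i / pbar (φ k) := by
      intro i k
      have hne := (hpbar_pos (φ k)).ne'
      rw [hpx (φ k), heig (φ k), hx (φ k)]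
      simp only [Pi.smul_apply, smul_eq_mul]
      field_simp
    have heigen : ∀ i, Tinf xinf i = laminf * xinf i := by
      intro i
      have hlim2 : Tendsto (fun k => T (pbar (φ k) • x (φ k)) i / pbar (φ k))
          atTop (nhds (laminf * xinf i)) := by
        refine Tendsto.congr (fun k => hptwise i k) ?_
        exact (hlam_lim.comp hφ).mul (hxconv i)
      exact tendsto_nhds_unique (hlimT i) hlim2
    constructor
    · funext i
      simpa using heigen i
    · have h1 : Tendsto (fun k => νa (x (φ k))) atTop (nhds (νa xinf)) :=
        (hνacont.tendsto xinf).comp hconv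
      have h2 : Tendsto (fun k => νa (x (φ k))) atTop (nhds 1) := by
        refine Tendsto.congr (fun k => (hνax (φ k)).symm) tendsto_const_nhds
      exact tendsto_nhds_unique h1 h2
  -- part 2
  have part2 : ∀ xinf : Fin N → ℝ, 0 ≤ xinf → MapClusterPt xinf atTop x →
      Tinf xinf = laminf • xinf ∧ νa xinf = 1 := by
    intro xinf hge hcl
    obtain ⟨ψ, hψ, hconv⟩ := TopologicalSpace.FirstCountableTopology.tendsto_subseq hcl
    exact hkey ψ hψ.tendsto_atTop xinf hge hconv
  refine ⟨part1, part2, ?_⟩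
  -- part 3
  intro _hs huniq
  have hlaminf_nn : 0 ≤ laminf :=
    ge_of_tendsto hlam_lim (Eventually.of_forall fun n => (hlam_pos n).le)
  set K : Set (Fin N → ℝ) := Set.Icc 0 (fun _ => C) with hKdef
  have hKcomp : IsCompact K := isCompact_Icc
  have hmem : ∀ n, x n ∈ K := by
    intro n
    exact ⟨hxnn n, fun i => hxC n i⟩
  have hlameq : laminf = lam' := by
    obtain ⟨a, haK, ψ, hψ, hconv⟩ := hKcomp.tendsto_subseq hmem
    have hcl : MapClusterPt a atTop x :=
      MapClusterPt.of_comp hψ.tendsto_atTop hconv.mapClusterPt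
    obtain ⟨heigA, hνaA⟩ := hkey ψ hψ.tendsto_atTop a haK.1 hconv
    exact (huniq a laminf haK.1 hlaminf_nn heigA hνaA).2
  refine ⟨?_, hlameq⟩
  refine tendsto_of_subseq_tendsto fun ns hns => ?_
  obtain ⟨b, hbK, ms, hms, hconv2⟩ := hKcomp.tendsto_subseq (fun n => hmem (ns n))
  obtain ⟨heigB, hνaB⟩ := hkey (ns ∘ ms) (hns.comp hms.tendsto_atTop) b hbK.1 hconv2
  have hbeq : b = x' := (huniq b laminf hbK.1 hlaminf_nn heigB hνaB).1
  exact ⟨ms, hbeq ▸ hconv2⟩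
end

section
/- Let T : ℝ^N_+ → ℝ^N_{++} be a continuous SI mapping, ‖·‖_a a monotone norm on ℝ^N, and T_∞ its asymptotic mapping (a continuous GI mapping). Suppose for every p̄ > 0 there is a pair (p_{p̄}, λ_{p̄}) ∈ ℝ^N_{++} × ℝ_{++} with T(p_{p̄}) = λ_{p̄} p_{p̄} and ‖p_{p̄}‖_a = p̄ (such a pair exists and is unique since T is a continuous SI mapping). Then the function p̄ ↦ λ_{p̄} is nonincreasing, the limit λ_∞ := lim_{p̄→∞} λ_{p̄} exists, and λ_∞ = ρ(T_∞), the spectral radius of the asymptotic mapping. -/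
open Filter Topology

/-- For a continuous SI mapping T, the eigenvalues λ_{p̄} of the
conditional eigenvalue problems with budget p̄ form a nonincreasing function of
p̄ whose limit as p̄ → ∞ exists and equals the spectral radius of the
asymptotic mapping T_∞. -/
theorem stmt12 {N : ℕ} (T : (Fin N → ℝ) → (Fin N → ℝ))
    (hpos : ∀ x : Fin N → ℝ, 0 ≤ x → ∀ i, 0 < T x i)
    (hmono : ∀ x y : Fin N → ℝ, 0 ≤ x → x ≤ y → T x ≤ T y)
    (hscal : ∀ x : Fin N → ℝ, 0 ≤ x → ∀ α : ℝ, 1 < α → ∀ i, T (α • x) i < α * T x i)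
    (hcont : ContinuousOn T {x : Fin N → ℝ | 0 ≤ x})
    (νa : (Fin N → ℝ) → ℝ)
    (hνa0 : ∀ x, νa x = 0 ↔ x = 0)
    (hνas : ∀ (a : ℝ) (x : Fin N → ℝ), νa (a • x) = |a| * νa x)
    (hνat : ∀ x y : Fin N → ℝ, νa (x + y) ≤ νa x + νa y)
    (hνam : ∀ x y : Fin N → ℝ, 0 ≤ x → x ≤ y → νa x ≤ νa y)
    (Tinf : (Fin N → ℝ) → (Fin N → ℝ))
    (hTinf : ∀ x : Fin N → ℝ, 0 ≤ x → ∀ i,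
      Tendsto (fun h : ℝ => T (h • x) i / h) atTop (nhds (Tinf x i)))
    (p : ℝ → Fin N → ℝ) (lam : ℝ → ℝ)
    (hsol : ∀ q : ℝ, 0 < q →
      (∀ i, 0 < p q i) ∧ 0 < lam q ∧ T (p q) = lam q • p q ∧ νa (p q) = q) :
    (∀ q₁ q₂ : ℝ, 0 < q₂ → q₂ ≤ q₁ → lam q₁ ≤ lam q₂) ∧
    Tendsto lam atTop
      (nhds (sSup {μ : ℝ | 0 ≤ μ ∧
        ∃ x : Fin N → ℝ, 0 ≤ x ∧ x ≠ 0 ∧ Tinf x = μ • x})) := by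
  classical
  -- dispose of the degenerate case N = 0
  rcases Nat.eq_zero_or_pos N with hN | hN
  · exfalso
    obtain ⟨-, -, -, hν⟩ := hsol 1 one_pos
    have hp0 : p 1 = 0 := funext fun i => absurd i.isLt (by omega)
    have h0 : νa (0 : Fin N → ℝ) = 0 := (hνa0 0).mpr rfl
    rw [hp0, h0] at hν
    exact zero_ne_one hν
  haveI : Nonempty (Fin N) := ⟨⟨0, hN⟩⟩
  -- νa is nonnegative
  have hνa_nonneg : ∀ x, 0 ≤ νa x := by
    intro x
    have h1 : νa (x + (-1 : ℝ) • x) ≤ νa x + νa ((-1 : ℝ) • x) := hνat _ _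
    have h2 : x + (-1 : ℝ) • x = 0 := by
      funext i; simp
    rw [h2, (hνa0 0).mpr rfl, hνas] at h1
    simp only [abs_neg, abs_one, one_mul] at h1
    linarith
  -- h ↦ T(h x)/h is antitone on (0, ∞)
  have hscale : ∀ x : Fin N → ℝ, 0 ≤ x → ∀ h h' : ℝ, 0 < h → h ≤ h' → ∀ i,
      T (h' • x) i / h' ≤ T (h • x) i / h := by
    intro x hx h h' hh hhh' i
    rcases eq_or_lt_of_le hhh' with rfl | hlt
    · exact le_rfl
    have hh' : 0 < h' := hh.trans hlt
    have hα : 1 < h' / h := (one_lt_div hh).mpr hlt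
    have hxnn : (0 : Fin N → ℝ) ≤ h • x := smul_nonneg hh.le hx
    have hsc := hscal (h • x) hxnn (h' / h) hα i
    have heq : (h' / h) • (h • x) = h' • x := by
      rw [smul_smul, div_mul_cancel₀ _ hh.ne']
    rw [heq] at hsc
    have h3 : T (h' • x) i / h' ≤ ((h' / h) * T (h • x) i) / h' := div_le_div_of_nonneg_right hsc.le hh'.le
    have h4 : ((h' / h) * T (h • x) i) / h' = T (h • x) i / h := by
      field_simp
    rw [h4] at h3; exact h3
  -- Tinf is the pointwise infimum of the family; in particular Tinf x ≤ T(hx)/h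
  have hTinf_le : ∀ x : Fin N → ℝ, 0 ≤ x → ∀ h : ℝ, 0 < h → ∀ i,
      Tinf x i ≤ T (h • x) i / h := by
    intro x hx h hh i
    exact le_of_tendsto (hTinf x hx i)
      (eventually_atTop.2 ⟨h, fun h' hh' => hscale x hx h h' hh hh' i⟩)
  have hTinf_nonneg : ∀ x : Fin N → ℝ, 0 ≤ x → ∀ i, 0 ≤ Tinf x i := by
    intro x hx i
    refine ge_of_tendsto (hTinf x hx i) (eventually_atTop.2 ⟨1, fun h hh => ?_⟩)
    have h0 : (0:ℝ) < h := lt_of_lt_of_le one_pos hh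
    exact div_nonneg (hpos _ (smul_nonneg h0.le hx) i).le h0.le
  have hTinf_mono : ∀ x y : Fin N → ℝ, 0 ≤ x → x ≤ y → ∀ i, Tinf x i ≤ Tinf y i := by
    intro x y hx hxy i
    refine le_of_tendsto_of_tendsto (hTinf x hx i) (hTinf y (hx.trans hxy) i)
      (eventually_atTop.2 ⟨1, fun h hh => ?_⟩)
    have h0 : (0:ℝ) < h := lt_of_lt_of_le one_pos hh
    have := hmono (h • x) (h • y) (smul_nonneg h0.le hx)
      (smul_le_smul_of_nonneg_left hxy h0.le) i
    exact div_le_div_of_nonneg_right this h0.le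
  have hTinf_hom : ∀ x : Fin N → ℝ, 0 ≤ x → ∀ c : ℝ, 0 < c →
      Tinf (c • x) = c • Tinf x := by
    intro x hx c hc
    funext i
    have h1 : Tendsto (fun h : ℝ => T (h • (c • x)) i / h) atTop (𝓝 (Tinf (c • x) i)) :=
      hTinf _ (smul_nonneg hc.le hx) i
    have hmul : Tendsto (fun h : ℝ => c * h) atTop atTop :=
      Tendsto.const_mul_atTop hc tendsto_id
    have h2 : Tendsto (fun h : ℝ => c * (T ((c * h) • x) i / (c * h))) atTop
        (𝓝 (c * Tinf x i)) :=
      (((hTinf x hx i).comp hmul)).const_mul c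
    have h3 : (fun h : ℝ => c * (T ((c * h) • x) i / (c * h))) =ᶠ[atTop]
        (fun h : ℝ => T (h • (c • x)) i / h) := by
      filter_upwards [eventually_gt_atTop (0:ℝ)] with h hh
      have : h • (c • x) = (c * h) • x := by rw [smul_smul, mul_comm]
      rw [this]
      field_simp
    have h5 : Tendsto (fun h : ℝ => T (h • (c • x)) i / h) atTop (𝓝 (c * Tinf x i)) :=
      h2.congr' h3
    have := tendsto_nhds_unique h1 h5
    simpa [Pi.smul_apply, smul_eq_mul] using this
  -- every eigenvalue of Tinf is at most every lam q
  have hub : ∀ (μ : ℝ) (x : Fin N → ℝ), 0 ≤ x → x ≠ 0 → Tinf x = μ • x →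
      ∀ q : ℝ, 0 < q → μ ≤ lam q := by
    intro μ x hx hx0 heig q hq
    obtain ⟨hppos, hlam, hTp, hνp⟩ := hsol q hq
    obtain ⟨j, -, hj⟩ := Finset.exists_max_image Finset.univ (fun i => x i / p q i)
      Finset.univ_nonempty
    set s : ℝ := x j / p q j with hs
    obtain ⟨k, hk⟩ : ∃ k, 0 < x k := by
      by_contra hcon
      push_neg at hcon
      exact hx0 (funext fun k => le_antisymm (hcon k) (hx k))
    have hspos : 0 < s :=
      lt_of_lt_of_le (div_pos hk (hppos k)) (hj k (Finset.mem_univ k))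
    have hle : x ≤ s • p q := by
      intro i
      have := hj i (Finset.mem_univ i)
      simpa [Pi.smul_apply, smul_eq_mul] using (div_le_iff₀ (hppos i)).mp this
    have hppos' : (0 : Fin N → ℝ) ≤ p q := fun i => (hppos i).le
    have h1 : Tinf x j ≤ Tinf (s • p q) j := hTinf_mono x _ hx hle j
    have h2 : Tinf (s • p q) j = s * Tinf (p q) j := by
      rw [hTinf_hom (p q) hppos' s hspos]; simp
    have h3 : Tinf (p q) j ≤ T (p q) j := by
      have := hTinf_le (p q) hppos' 1 one_pos j
      simpa using this
    have hxj : x j = s * p q j := by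
      rw [hs, div_mul_cancel₀ _ (hppos j).ne']
    have hTpj : T (p q) j = lam q * p q j := by rw [hTp]; simp
    have hchain : μ * x j ≤ lam q * x j := by
      have e1 : Tinf x j = μ * x j := by rw [heig]; simp
      calc μ * x j = Tinf x j := e1.symm
        _ ≤ Tinf (s • p q) j := h1
        _ = s * Tinf (p q) j := h2
        _ ≤ s * T (p q) j := by
            have := mul_le_mul_of_nonneg_left h3 hspos.le
            linarith
        _ = lam q * (s * p q j) := by rw [hTpj]; ring
        _ = lam q * x j := by rw [← hxj]
    have hxjpos : 0 < x j := by rw [hxj]; exact mul_pos hspos (hppos j)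
    exact le_of_mul_le_mul_right (by linarith [hchain]) hxjpos
  -- monotonicity of lam
  have hmono_lam : ∀ q₁ q₂ : ℝ, 0 < q₂ → q₂ ≤ q₁ → lam q₁ ≤ lam q₂ := by
    intro q₁ q₂ hq₂ hq
    have hq₁ : 0 < q₁ := lt_of_lt_of_le hq₂ hq
    obtain ⟨hp1, hl1, hT1, hν1⟩ := hsol q₁ hq₁
    obtain ⟨hp2, hl2, hT2, hν2⟩ := hsol q₂ hq₂
    obtain ⟨j, -, hj⟩ := Finset.exists_max_image Finset.univ (fun i => p q₁ i / p q₂ i)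
      Finset.univ_nonempty
    set s : ℝ := p q₁ j / p q₂ j with hs
    have hspos : 0 < s := div_pos (hp1 j) (hp2 j)
    have hle : ∀ i, p q₁ i ≤ s * p q₂ i := by
      intro i
      have := hj i (Finset.mem_univ i)
      exact (div_le_iff₀ (hp2 i)).mp this
    have hsj : p q₁ j = s * p q₂ j := by rw [hs, div_mul_cancel₀ _ (hp2 j).ne']
    have hp1nn : (0 : Fin N → ℝ) ≤ p q₁ := fun i => (hp1 i).le
    rcases lt_trichotomy s 1 with hst | hst | hst
    · exfalso
      have h1 : p q₁ ≤ s • p q₂ := fun i => by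
        simpa [Pi.smul_apply, smul_eq_mul] using hle i
      have h2 : νa (p q₁) ≤ νa (s • p q₂) := hνam _ _ hp1nn h1
      rw [hν1, hνas, hν2, abs_of_pos hspos] at h2
      nlinarith
    · have h1 : p q₁ ≤ p q₂ := fun i => by
        have := hle i; rw [hst, one_mul] at this; exact this
      have h2 := hmono _ _ hp1nn h1 j
      rw [hT1, hT2] at h2
      simp only [Pi.smul_apply, smul_eq_mul] at h2
      have hj2 : p q₁ j = p q₂ j := by rw [hsj, hst, one_mul]
      rw [← hj2] at h2
      exact le_of_mul_le_mul_right (by linarith [h2]) (hp1 j)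
    · have hp2nn : (0 : Fin N → ℝ) ≤ p q₂ := fun i => (hp2 i).le
      have h1 : T (p q₁) j ≤ T (s • p q₂) j := by
        refine hmono _ _ hp1nn (fun i => ?_) j
        simpa [Pi.smul_apply, smul_eq_mul] using hle i
      have h2 : T (s • p q₂) j < s * T (p q₂) j := hscal _ hp2nn s hst j
      rw [hT1] at h1
      rw [hT2] at h2
      simp only [Pi.smul_apply, smul_eq_mul] at h1 h2
      have h3 : lam q₁ * p q₁ j < lam q₂ * p q₁ j := by
        calc lam q₁ * p q₁ j ≤ T (s • p q₂) j := h1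
          _ < s * (lam q₂ * p q₂ j) := h2
          _ = lam q₂ * (s * p q₂ j) := by ring
          _ = lam q₂ * p q₁ j := by rw [← hsj]
      exact (le_of_mul_le_mul_right (by linarith [h3]) (hp1 j))
  -- the limit L of lam at infinity
  set lam' : ℝ → ℝ := fun q => lam (max q 1) with hlam'def
  have hmax_pos : ∀ q : ℝ, (0:ℝ) < max q 1 := fun q => lt_of_lt_of_le one_pos (le_max_right q 1)
  have hanti : Antitone lam' := by
    intro a b hab
    exact hmono_lam (max b 1) (max a 1) (hmax_pos a) (max_le_max hab le_rfl)
  have hbdd : BddBelow (Set.range lam') := by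
    refine ⟨0, ?_⟩
    rintro y ⟨q, rfl⟩
    exact (hsol _ (hmax_pos q)).2.1.le
  set L : ℝ := ⨅ q : ℝ, lam' q with hLdef
  have hL' : Tendsto lam' atTop (𝓝 L) := tendsto_atTop_ciInf hanti hbdd
  have hLlam : Tendsto lam atTop (𝓝 L) := by
    refine hL'.congr' ?_
    filter_upwards [eventually_ge_atTop (1:ℝ)] with q hq
    simp [hlam'def, max_eq_left hq]
  have hL0 : 0 ≤ L := le_ciInf fun q => (hsol _ (hmax_pos q)).2.1.le
  have hμL : ∀ (μ : ℝ) (x : Fin N → ℝ), 0 ≤ x → x ≠ 0 → Tinf x = μ • x → μ ≤ L :=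
    fun μ x hx hx0 he => le_ciInf fun q => hub μ x hx hx0 he (max q 1) (hmax_pos q)
  -- the compact box containing the normalized eigenvectors
  set e : Fin N → (Fin N → ℝ) := fun i => Pi.single i 1 with hedef
  have hepos : ∀ i, 0 < νa (e i) := by
    intro i
    refine lt_of_le_of_ne (hνa_nonneg _) (Ne.symm ?_)
    intro h0
    have he0 : e i = 0 := (hνa0 _).mp h0
    have : (1:ℝ) = 0 := by
      have := congrFun he0 i
      simpa [hedef, Pi.single_eq_same] using this
    norm_num at this
  set b : Fin N → ℝ := fun i => (νa (e i))⁻¹ with hbdef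
  set qn : ℕ → ℝ := fun n => (n : ℝ) + 1 with hqndef
  have hqn : ∀ n, 0 < qn n := fun n => by positivity
  set xn : ℕ → Fin N → ℝ := fun n => (qn n)⁻¹ • p (qn n) with hxndef
  have hxn0 : ∀ n, (0 : Fin N → ℝ) ≤ xn n := fun n i =>
    mul_nonneg (inv_nonneg.mpr (hqn n).le) ((hsol _ (hqn n)).1 i).le
  have hpx : ∀ n, qn n • xn n = p (qn n) := by
    intro n
    rw [hxndef]
    rw [smul_smul, mul_inv_cancel₀ (hqn n).ne', one_smul]
  have key0 : ∀ n i, T (qn n • xn n) i / qn n = lam (qn n) * xn n i := by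
    intro n i
    rw [hpx n, (hsol _ (hqn n)).2.2.1]
    simp only [Pi.smul_apply, smul_eq_mul, hxndef]
    field_simp
  have hνxn : ∀ n, νa (xn n) = 1 := by
    intro n
    rw [hxndef]
    simp only []
    rw [hνas, (hsol _ (hqn n)).2.2.2, abs_of_pos (inv_pos.mpr (hqn n)),
      inv_mul_cancel₀ (hqn n).ne']
  have hxnmem : ∀ n, xn n ∈ Set.Icc (0 : Fin N → ℝ) b := by
    intro n
    refine ⟨hxn0 n, fun i => ?_⟩
    have hsingle : p (qn n) i • e i ≤ p (qn n) := by
      intro k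
      rcases eq_or_ne k i with rfl | hki
      · simp [hedef, Pi.single_eq_same]
      · have hz : (p (qn n) i • e i) k = 0 := by
          simp [hedef, Pi.single_eq_of_ne hki]
        rw [hz]
        exact ((hsol _ (hqn n)).1 k).le
    have h0 : (0 : Fin N → ℝ) ≤ p (qn n) i • e i :=
      smul_nonneg ((hsol _ (hqn n)).1 i).le (fun k => by
        rcases eq_or_ne k i with rfl | hki
        · simp [hedef, Pi.single_eq_same]
        · simp [hedef, Pi.single_eq_of_ne hki])
    have h1 : νa (p (qn n) i • e i) ≤ νa (p (qn n)) := hνam _ _ h0 hsingle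
    rw [hνas, (hsol _ (hqn n)).2.2.2, abs_of_pos ((hsol _ (hqn n)).1 i)] at h1
    have h2 : p (qn n) i ≤ qn n * b i := by
      have hb : qn n * b i = qn n / νa (e i) := by rw [hbdef]; ring
      rw [hb, le_div_iff₀ (hepos i)]
      exact h1
    have : xn n i = (qn n)⁻¹ * p (qn n) i := rfl
    rw [this]
    calc (qn n)⁻¹ * p (qn n) i ≤ (qn n)⁻¹ * (qn n * b i) :=
          mul_le_mul_of_nonneg_left h2 (inv_nonneg.mpr (hqn n).le)
      _ = b i := by rw [← mul_assoc, inv_mul_cancel₀ (hqn n).ne', one_mul]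
  -- triangle inequality for finite sums
  have htri : ∀ (f : Fin N → Fin N → ℝ) (s : Finset (Fin N)),
      νa (∑ i ∈ s, f i) ≤ ∑ i ∈ s, νa (f i) := by
    intro f s
    induction s using Finset.cons_induction with
    | empty => simp [(hνa0 0).mpr rfl]
    | cons a s ha ih =>
      rw [Finset.sum_cons, Finset.sum_cons]
      exact (hνat _ _).trans (by linarith)
  have hsumle : ∀ x : Fin N → ℝ, 0 ≤ x → νa x ≤ ∑ i, x i * νa (e i) := by
    intro x hx
    have hx' : x = ∑ i, x i • e i := by
      rw [show (fun i => x i • e i) = fun i => Pi.single i (x i) from ?_]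
      · exact (Finset.univ_sum_single x).symm
      · funext i
        funext k
        rcases eq_or_ne k i with rfl | hk
        · simp [hedef]
        · simp [hedef, Pi.single_eq_of_ne hk]
    calc νa x = νa (∑ i, x i • e i) := by rw [← hx']
      _ ≤ ∑ i, νa (x i • e i) := htri _ _
      _ = ∑ i, x i * νa (e i) := by
          refine Finset.sum_congr rfl fun i _ => ?_
          rw [hνas, abs_of_nonneg (hx i)]
  have hsum1 : ∀ n, 1 ≤ ∑ i, xn n i * νa (e i) := by
    intro n
    have := hsumle (xn n) (hxn0 n)
    rw [hνxn n] at this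
    exact this
  -- extract a convergent subsequence
  obtain ⟨xs, hxsK, φ, hφ, hconv⟩ :=
    (isCompact_Icc (a := (0 : Fin N → ℝ)) (b := b)).tendsto_subseq hxnmem
  have hxs0 : (0 : Fin N → ℝ) ≤ xs := hxsK.1
  have hci : ∀ i, Tendsto (fun n => xn (φ n) i) atTop (𝓝 (xs i)) := fun i =>
    tendsto_pi_nhds.mp hconv i
  have hxs_ne : xs ≠ 0 := by
    have hts : Tendsto (fun n => ∑ i, xn (φ n) i * νa (e i)) atTop
        (𝓝 (∑ i, xs i * νa (e i))) :=
      tendsto_finset_sum _ (fun i _ => (hci i).mul_const _)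
    have h1 : 1 ≤ ∑ i, xs i * νa (e i) :=
      ge_of_tendsto hts (Eventually.of_forall fun n => hsum1 _)
    intro h0
    rw [h0] at h1
    simp at h1
    linarith
  have hqφ : Tendsto (fun n => qn (φ n)) atTop atTop := by
    refine tendsto_atTop_mono (fun n => ?_) tendsto_natCast_atTop_atTop
    have h1 : (n : ℝ) ≤ (φ n : ℝ) := by exact_mod_cast Nat.cast_le.mpr hφ.le_apply
    rw [hqndef]
    simp only []
    linarith
  have hlamconv : Tendsto (fun n => lam (qn (φ n))) atTop (𝓝 L) := hLlam.comp hqφ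
  have hRHSconv : ∀ i, Tendsto (fun n => lam (qn (φ n)) * xn (φ n) i) atTop
      (𝓝 (L * xs i)) := fun i => hlamconv.mul (hci i)
  -- Step A : L • xs ≤ Tinf xs
  have hA : ∀ i, L * xs i ≤ Tinf xs i := by
    intro i
    have hAh : ∀ h : ℝ, 0 < h → L * xs i ≤ T (h • xs) i / h := by
      intro h hh
      have hTc : Tendsto (fun n => T (h • xn (φ n)) i / h) atTop
          (𝓝 (T (h • xs) i / h)) := by
        have h1 : Tendsto (fun n => h • xn (φ n)) atTop (𝓝[{x : Fin N → ℝ | 0 ≤ x}] (h • xs)) :=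
          tendsto_nhdsWithin_of_tendsto_nhds_of_eventually_within _
            (hconv.const_smul h)
            (Eventually.of_forall fun n => smul_nonneg hh.le (hxn0 _))
        have h2 := ((hcont (h • xs) (smul_nonneg hh.le hxs0)).tendsto.comp h1)
        exact ((tendsto_pi_nhds.mp h2) i).div_const h
      refine le_of_tendsto_of_tendsto (hRHSconv i) hTc ?_
      filter_upwards [hqφ.eventually (eventually_ge_atTop h)] with n hn
      rw [← key0 (φ n) i]
      exact hscale (xn (φ n)) (hxn0 _) h (qn (φ n)) hh hn i
    exact ge_of_tendsto (hTinf xs hxs0 i)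
      (eventually_atTop.2 ⟨1, fun h hh => hAh h (lt_of_lt_of_le one_pos hh)⟩)
  -- Step B : Tinf xs ≤ L • xs
  have hB : ∀ i, Tinf xs i ≤ L * xs i := by
    intro i
    have hδ : ∀ δ : ℝ, 0 < δ → δ < 1 → (1 - δ) * Tinf xs i ≤ L * xs i := by
      intro δ hδ0 hδ1
      have hev : ∀ᶠ n in atTop, ∀ k, (1 - δ) * xs k ≤ xn (φ n) k := by
        rw [eventually_all]
        intro k
        rcases eq_or_lt_of_le (show (0:ℝ) ≤ xs k from hxs0 k) with hk0 | hk0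
        · refine Eventually.of_forall fun n => ?_
          rw [← hk0, mul_zero]
          exact hxn0 (φ n) k
        · have hlt : (1 - δ) * xs k < xs k := by nlinarith
          exact (hci k).eventually (eventually_gt_nhds hlt) |>.mono fun n hn => hn.le
      refine ge_of_tendsto (hRHSconv i) ?_
      filter_upwards [hev] with n hn
      have hstep1 : (1 - δ) * Tinf xs i = Tinf ((1 - δ) • xs) i := by
        rw [hTinf_hom xs hxs0 (1 - δ) (by linarith)]
        simp
      calc (1 - δ) * Tinf xs i = Tinf ((1 - δ) • xs) i := hstep1
        _ ≤ Tinf (xn (φ n)) i := by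
            refine hTinf_mono _ _ (smul_nonneg (by linarith) hxs0) (fun k => ?_) i
            simpa [Pi.smul_apply, smul_eq_mul] using hn k
        _ ≤ T (qn (φ n) • xn (φ n)) i / qn (φ n) := hTinf_le _ (hxn0 _) _ (hqn _) i
        _ = lam (qn (φ n)) * xn (φ n) i := key0 _ i
    -- let δ → 0
    have htend : Tendsto (fun k : ℕ => (1 - 1 / ((k : ℝ) + 2)) * Tinf xs i) atTop
        (𝓝 (Tinf xs i)) := by
      have h1 : Tendsto (fun k : ℕ => ((k : ℝ) + 2)) atTop atTop :=
        tendsto_atTop_add_const_right _ 2 tendsto_natCast_atTop_atTop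
      have h2 : Tendsto (fun k : ℕ => 1 / ((k : ℝ) + 2)) atTop (𝓝 0) := by
        simpa [Function.comp_def] using (tendsto_inv_atTop_zero.comp h1)
      have h3 : Tendsto (fun k : ℕ => 1 - 1 / ((k : ℝ) + 2)) atTop (𝓝 1) := by
        simpa using (tendsto_const_nhds (x := (1:ℝ))).sub h2
      simpa using h3.mul_const (Tinf xs i)
    refine le_of_tendsto htend (Eventually.of_forall fun k => ?_)
    have hk2 : (0:ℝ) < (k : ℝ) + 2 := by positivity
    refine hδ (1 / ((k : ℝ) + 2)) (by positivity) ?_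
    rw [div_lt_one hk2]
    have : (0:ℝ) ≤ (k:ℝ) := Nat.cast_nonneg k
    linarith
  have heig : Tinf xs = L • xs := by
    funext i
    have : (L • xs) i = L * xs i := rfl
    rw [this]
    exact le_antisymm (hB i) (hA i)
  -- assembly
  have hLmem : L ∈ {μ : ℝ | 0 ≤ μ ∧ ∃ x : Fin N → ℝ, 0 ≤ x ∧ x ≠ 0 ∧ Tinf x = μ • x} :=
    ⟨hL0, xs, hxs0, hxs_ne, heig⟩
  have hub' : ∀ μ ∈ {μ : ℝ | 0 ≤ μ ∧ ∃ x : Fin N → ℝ, 0 ≤ x ∧ x ≠ 0 ∧ Tinf x = μ • x},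
      μ ≤ L := by
    rintro μ ⟨hμ0, x, hx, hx0, he⟩
    exact hμL μ x hx hx0 he
  have hsupeq : sSup {μ : ℝ | 0 ≤ μ ∧ ∃ x : Fin N → ℝ, 0 ≤ x ∧ x ≠ 0 ∧ Tinf x = μ • x} = L :=
    le_antisymm (csSup_le ⟨L, hLmem⟩ hub') (le_csSup ⟨L, hub'⟩ hLmem)
  refine ⟨hmono_lam, ?_⟩
  rw [hsupeq]
  exact hLlam
end

section
/- Let T : ℝ^N_+ → ℝ^N_{++} be a continuous SI mapping, ‖·‖_a and ‖·‖_b monotone norms on ℝ^N, and suppose λ_∞ := ρ(T_∞) > 0, where T_∞ is the asymptotic mapping of T. Suppose for each p̄ > 0 the pair (P(p̄), U(p̄)) ∈ ℝ^N_{++} × ℝ_{++} satisfies P(p̄) = U(p̄) T(P(p̄)) and ‖P(p̄)‖_a = p̄, and set E(p̄) := U(p̄)/‖P(p̄)‖_b. Then sup_{p̄>0} U(p̄) = lim_{p̄→∞} U(p̄) = 1/λ_∞, and sup_{p̄>0} E(p̄) = lim_{p̄→0⁺} E(p̄) = 1/‖T(0)‖_b. -/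
open Filter Topology

private lemma nu_zero {N : ℕ} {ν : (Fin N → ℝ) → ℝ}
    (hs : ∀ (a : ℝ) (x : Fin N → ℝ), ν (a • x) = |a| * ν x) : ν 0 = 0 := by
  have h := hs 0 0
  simpa using h

private lemma nu_nonneg {N : ℕ} {ν : (Fin N → ℝ) → ℝ}
    (hs : ∀ (a : ℝ) (x : Fin N → ℝ), ν (a • x) = |a| * ν x)
    (ht : ∀ x y : Fin N → ℝ, ν (x + y) ≤ ν x + ν y) (x : Fin N → ℝ) : 0 ≤ ν x := by
  have h1 : ν (x + (-1 : ℝ) • x) ≤ ν x + ν ((-1 : ℝ) • x) := ht _ _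
  have h2 : x + (-1 : ℝ) • x = 0 := by
    funext i; simp
  rw [h2, nu_zero hs, hs] at h1
  simp at h1
  linarith

private lemma nu_pos {N : ℕ} {ν : (Fin N → ℝ) → ℝ}
    (h0 : ∀ x, ν x = 0 ↔ x = 0)
    (hs : ∀ (a : ℝ) (x : Fin N → ℝ), ν (a • x) = |a| * ν x)
    (ht : ∀ x y : Fin N → ℝ, ν (x + y) ≤ ν x + ν y)
    {x : Fin N → ℝ} (hx : x ≠ 0) : 0 < ν x := by
  rcases lt_or_eq_of_le (nu_nonneg hs ht x) with h | h
  · exact h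
  · exact absurd ((h0 x).mp h.symm) hx

private lemma nu_sum {N : ℕ} {ν : (Fin N → ℝ) → ℝ}
    (hs : ∀ (a : ℝ) (x : Fin N → ℝ), ν (a • x) = |a| * ν x)
    (ht : ∀ x y : Fin N → ℝ, ν (x + y) ≤ ν x + ν y)
    {α : Type*} (s : Finset α) (g : α → Fin N → ℝ) :
    ν (∑ i ∈ s, g i) ≤ ∑ i ∈ s, ν (g i) := by
  induction s using Finset.cons_induction with
  | empty => simp [nu_zero hs]
  | cons a s ha ih =>
      rw [Finset.sum_cons, Finset.sum_cons]
      exact le_trans (ht _ _) (by linarith)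

private lemma single_eq_smul {N : ℕ} (i : Fin N) (c : ℝ) :
    Pi.single i c = c • (Pi.single i (1 : ℝ) : Fin N → ℝ) := by
  funext j
  by_cases h : j = i <;> simp [Pi.single_apply, h]

private lemma nu_decomp {N : ℕ} {ν : (Fin N → ℝ) → ℝ}
    (hs : ∀ (a : ℝ) (x : Fin N → ℝ), ν (a • x) = |a| * ν x)
    (ht : ∀ x y : Fin N → ℝ, ν (x + y) ≤ ν x + ν y)
    (z : Fin N → ℝ) : ν z ≤ ∑ i, |z i| * ν (Pi.single i 1) := by
  calc ν z = ν (∑ i, Pi.single i (z i)) := by rw [Finset.univ_sum_single]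
    _ ≤ ∑ i, ν (Pi.single i (z i)) := nu_sum hs ht _ _
    _ = ∑ i, |z i| * ν (Pi.single i 1) := by
        refine Finset.sum_congr rfl fun i _ => ?_
        rw [single_eq_smul, hs]

private lemma nu_abs_sub {N : ℕ} {ν : (Fin N → ℝ) → ℝ}
    (hs : ∀ (a : ℝ) (x : Fin N → ℝ), ν (a • x) = |a| * ν x)
    (ht : ∀ x y : Fin N → ℝ, ν (x + y) ≤ ν x + ν y)
    (x y : Fin N → ℝ) : |ν x - ν y| ≤ ν (x - y) := by
  rw [abs_sub_le_iff]
  constructor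
  · have h1 : ν (y + (x - y)) ≤ ν y + ν (x - y) := ht _ _
    simp at h1
    linarith
  · have h1 : ν (x + (y - x)) ≤ ν x + ν (y - x) := ht _ _
    have h2 : y - x = (-1 : ℝ) • (x - y) := by rw [neg_one_smul]; exact (neg_sub x y).symm
    rw [h2, hs] at h1
    simp at h1
    linarith

private lemma nu_tendsto {N : ℕ} {ν : (Fin N → ℝ) → ℝ}
    (hs : ∀ (a : ℝ) (x : Fin N → ℝ), ν (a • x) = |a| * ν x)
    (ht : ∀ x y : Fin N → ℝ, ν (x + y) ≤ ν x + ν y)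
    {α : Type*} {l : Filter α} {f : α → Fin N → ℝ} {a : Fin N → ℝ}
    (hf : Tendsto f l (𝓝 a)) : Tendsto (fun t => ν (f t)) l (𝓝 (ν a)) := by
  rw [tendsto_iff_dist_tendsto_zero]
  apply squeeze_zero (fun t => dist_nonneg)
    (g := fun t => ∑ i, |(f t - a) i| * ν (Pi.single i 1))
  · intro t
    calc dist (ν (f t)) (ν a) = |ν (f t) - ν a| := Real.dist_eq _ _
      _ ≤ ν (f t - a) := nu_abs_sub hs ht _ _
      _ ≤ ∑ i, |(f t - a) i| * ν (Pi.single i 1) := nu_decomp hs ht _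
  · have hz : ∀ i : Fin N, Tendsto (fun t => |(f t - a) i| * ν (Pi.single i 1)) l (𝓝 0) := by
      intro i
      have h1 : Tendsto (fun t => f t i - a i) l (𝓝 0) := by
        simpa using ((tendsto_pi_nhds.mp hf i).sub_const (a i))
      have h2 : Tendsto (fun t => |f t i - a i| * ν (Pi.single i 1)) l (𝓝 (|(0:ℝ)| * ν (Pi.single i 1))) :=
        (h1.abs).mul_const _
      simpa using h2
    have h3 := tendsto_finset_sum (f := fun i t => |(f t - a) i| * ν (Pi.single i 1))
      (Finset.univ) (fun i _ => by simpa using hz i)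
    simpa using h3

private lemma nu_single_pos {N : ℕ} {ν : (Fin N → ℝ) → ℝ}
    (h0 : ∀ x, ν x = 0 ↔ x = 0)
    (hs : ∀ (a : ℝ) (x : Fin N → ℝ), ν (a • x) = |a| * ν x)
    (ht : ∀ x y : Fin N → ℝ, ν (x + y) ≤ ν x + ν y)
    (i : Fin N) : 0 < ν (Pi.single i (1 : ℝ)) := by
  apply nu_pos h0 hs ht
  intro h
  have := congrFun h i
  simp at this

private lemma nu_coord {N : ℕ} {ν : (Fin N → ℝ) → ℝ}
    (hs : ∀ (a : ℝ) (x : Fin N → ℝ), ν (a • x) = |a| * ν x)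
    (hm : ∀ x y : Fin N → ℝ, 0 ≤ x → x ≤ y → ν x ≤ ν y)
    {x : Fin N → ℝ} (hx : 0 ≤ x) (i : Fin N) :
    x i * ν (Pi.single i 1) ≤ ν x := by
  have h1 : (Pi.single i (x i) : Fin N → ℝ) ≤ x := by
    intro j
    by_cases h : j = i
    · subst h; simp
    · simp [Pi.single_apply, h]; exact hx j
  have h2 : (0 : Fin N → ℝ) ≤ Pi.single i (x i) := by
    intro j
    by_cases h : j = i
    · subst h; simp; exact hx j
    · simp [Pi.single_apply, h]
  have h3 := hm _ _ h2 h1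
  rw [single_eq_smul, hs, abs_of_nonneg (hx i)] at h3
  exact h3

/-- For the canonical max-min utility problem with a continuous
SI mapping T whose asymptotic mapping has positive spectral radius λ_∞, the
utility satisfies sup_{p̄>0} U(p̄) = lim_{p̄→∞} U(p̄) = 1/λ_∞ and the
‖·‖_b-efficiency satisfies sup_{p̄>0} E(p̄) = lim_{p̄→0⁺} E(p̄) = 1/‖T(0)‖_b. -/
theorem stmt13 {N : ℕ} (T : (Fin N → ℝ) → (Fin N → ℝ))
    (hpos : ∀ x : Fin N → ℝ, 0 ≤ x → ∀ i, 0 < T x i)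
    (hmono : ∀ x y : Fin N → ℝ, 0 ≤ x → x ≤ y → T x ≤ T y)
    (hscal : ∀ x : Fin N → ℝ, 0 ≤ x → ∀ α : ℝ, 1 < α → ∀ i, T (α • x) i < α * T x i)
    (hcont : ContinuousOn T {x : Fin N → ℝ | 0 ≤ x})
    (νa νb : (Fin N → ℝ) → ℝ)
    (hνa0 : ∀ x, νa x = 0 ↔ x = 0)
    (hνas : ∀ (a : ℝ) (x : Fin N → ℝ), νa (a • x) = |a| * νa x)
    (hνat : ∀ x y : Fin N → ℝ, νa (x + y) ≤ νa x + νa y)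
    (hνam : ∀ x y : Fin N → ℝ, 0 ≤ x → x ≤ y → νa x ≤ νa y)
    (hνb0 : ∀ x, νb x = 0 ↔ x = 0)
    (hνbs : ∀ (a : ℝ) (x : Fin N → ℝ), νb (a • x) = |a| * νb x)
    (hνbt : ∀ x y : Fin N → ℝ, νb (x + y) ≤ νb x + νb y)
    (hνbm : ∀ x y : Fin N → ℝ, 0 ≤ x → x ≤ y → νb x ≤ νb y)
    (Tinf : (Fin N → ℝ) → (Fin N → ℝ))
    (hTinf : ∀ x : Fin N → ℝ, 0 ≤ x → ∀ i,
      Tendsto (fun h : ℝ => T (h • x) i / h) atTop (nhds (Tinf x i)))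
    (laminf : ℝ)
    (hrad : laminf = sSup {μ : ℝ | 0 ≤ μ ∧
      ∃ x : Fin N → ℝ, 0 ≤ x ∧ x ≠ 0 ∧ Tinf x = μ • x})
    (hlaminf_pos : 0 < laminf)
    (P : ℝ → Fin N → ℝ) (U : ℝ → ℝ)
    (hsol : ∀ q : ℝ, 0 < q →
      (∀ i, 0 < P q i) ∧ 0 < U q ∧ P q = U q • T (P q) ∧ νa (P q) = q)
    (E : ℝ → ℝ) (hE : ∀ q : ℝ, E q = U q / νb (P q)) :
    (IsLUB (U '' Set.Ioi (0 : ℝ)) (1 / laminf) ∧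
      Tendsto U atTop (nhds (1 / laminf))) ∧
    (IsLUB (E '' Set.Ioi (0 : ℝ)) (1 / νb (T 0)) ∧
      Tendsto E (nhdsWithin (0 : ℝ) (Set.Ioi 0)) (nhds (1 / νb (T 0)))) := by
  classical
  -- Step 0 : N is positive
  have hNpos : 0 < N := by
    rcases Nat.eq_zero_or_pos N with hN | hN
    · exfalso
      subst hN
      have hSempty : {μ : ℝ | 0 ≤ μ ∧ ∃ x : Fin 0 → ℝ, 0 ≤ x ∧ x ≠ 0 ∧ Tinf x = μ • x} = ∅ := by
        ext μ
        simp only [Set.mem_setOf_eq, Set.mem_empty_iff_false, iff_false]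
        rintro ⟨-, x, -, hx, -⟩
        exact hx (funext fun i => i.elim0)
      rw [hSempty, Real.sSup_empty] at hrad
      linarith
    · exact hN
  have i₀ : Fin N := ⟨0, hNpos⟩
  have hne : (Finset.univ : Finset (Fin N)).Nonempty := ⟨i₀, Finset.mem_univ _⟩
  -- basic solution facts
  have hPpos : ∀ q : ℝ, 0 < q → ∀ i, 0 < P q i := fun q hq => (hsol q hq).1
  have hPnn : ∀ q : ℝ, 0 < q → (0 : Fin N → ℝ) ≤ P q := fun q hq i => (hPpos q hq i).le
  have hUpos : ∀ q : ℝ, 0 < q → 0 < U q := fun q hq => (hsol q hq).2.1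
  have hPnorm : ∀ q : ℝ, 0 < q → νa (P q) = q := fun q hq => (hsol q hq).2.2.2
  have hfixc : ∀ q : ℝ, 0 < q → ∀ i, P q i = U q * T (P q) i := by
    intro q hq i
    have h := congrFun (hsol q hq).2.2.1 i
    rwa [Pi.smul_apply, smul_eq_mul] at h
  have hTP : ∀ q : ℝ, 0 < q → ∀ i, T (P q) i = P q i / U q := by
    intro q hq i
    rw [eq_div_iff (hUpos q hq).ne']
    linarith [hfixc q hq i]
  -- Tinf helper facts
  have hanti : ∀ x : Fin N → ℝ, 0 ≤ x → ∀ h h' : ℝ, 0 < h → h ≤ h' → ∀ i,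
      T (h' • x) i / h' ≤ T (h • x) i / h := by
    intro x hx h h' hh hhh i
    rcases eq_or_lt_of_le hhh with rfl | hlt
    · exact le_refl _
    · have hh' : 0 < h' := lt_trans hh hlt
      have hsm : h' • x = (h' / h) • (h • x) := by
        rw [smul_smul]
        congr 1
        field_simp
      have h1 : 1 < h' / h := (one_lt_div hh).mpr hlt
      have h2 := hscal (h • x) (smul_nonneg hh.le hx) (h' / h) h1 i
      rw [← hsm] at h2
      have h3 : T (h' • x) i * h < T (h • x) i * h' := by
        have h4 := mul_lt_mul_of_pos_right h2 hh
        calc T (h' • x) i * h < h' / h * T (h • x) i * h := h4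
          _ = T (h • x) i * h' := by field_simp
      exact ((div_lt_div_iff₀ hh' hh).mpr h3).le
  have hTinf_le : ∀ x : Fin N → ℝ, 0 ≤ x → ∀ h : ℝ, 0 < h → ∀ i,
      Tinf x i ≤ T (h • x) i / h := by
    intro x hx h hh i
    refine le_of_tendsto (hTinf x hx i) ?_
    filter_upwards [eventually_ge_atTop h] with t htt
    exact hanti x hx h t hh htt i
  have hTinf_mono : ∀ x y : Fin N → ℝ, 0 ≤ x → x ≤ y → ∀ i, Tinf x i ≤ Tinf y i := by
    intro x y hx hxy i
    have hy : (0 : Fin N → ℝ) ≤ y := le_trans hx hxy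
    refine le_of_tendsto_of_tendsto (hTinf x hx i) (hTinf y hy i) ?_
    filter_upwards [eventually_gt_atTop (0:ℝ)] with t htt
    have hnum := hmono (t • x) (t • y) (smul_nonneg htt.le hx)
        (smul_le_smul_of_nonneg_left hxy htt.le) i
    show T (t • x) i / t ≤ T (t • y) i / t
    gcongr
  have hTinf_homog : ∀ x : Fin N → ℝ, 0 ≤ x → ∀ c : ℝ, 0 < c → ∀ i,
      Tinf (c • x) i = c * Tinf x i := by
    intro x hx c hc i
    have h1 : Tendsto (fun h : ℝ => h * c) atTop atTop :=
      Tendsto.atTop_mul_const hc tendsto_id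
    have h2 : Tendsto (fun h : ℝ => T ((h * c) • x) i / (h * c)) atTop (𝓝 (Tinf x i)) :=
      (hTinf x hx i).comp h1
    have h3 : Tendsto (fun h : ℝ => c * (T ((h * c) • x) i / (h * c))) atTop
        (𝓝 (c * Tinf x i)) := h2.const_mul c
    have h4 : Tendsto (fun h : ℝ => T (h • (c • x)) i / h) atTop (𝓝 (c * Tinf x i)) := by
      refine h3.congr' ?_
      filter_upwards [eventually_gt_atTop (0:ℝ)] with h hh
      have hsm : h • (c • x) = (h * c) • x := smul_smul h c x
      rw [hsm]
      field_simp
    exact tendsto_nhds_unique (hTinf (c • x) (smul_nonneg hc.le hx) i) h4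
  -- the eigenvalue set and its upper bounds
  have hSb : ∀ μ : ℝ, μ ∈ {μ : ℝ | 0 ≤ μ ∧
      ∃ x : Fin N → ℝ, 0 ≤ x ∧ x ≠ 0 ∧ Tinf x = μ • x} → ∀ q : ℝ, 0 < q → μ ≤ 1 / U q := by
    rintro μ ⟨hμ0, y, hy0, hyne, hyeig⟩ q hq
    have hx := hPpos q hq
    obtain ⟨j, -, hj⟩ := Finset.exists_mem_eq_sup' hne (fun i => y i / P q i)
    set c := Finset.univ.sup' hne (fun i => y i / P q i) with hcdef
    obtain ⟨i₁, hi₁⟩ : ∃ i, y i ≠ 0 := by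
      by_contra hcon
      push_neg at hcon
      exact hyne (funext fun i => hcon i)
    have hyi₁ : 0 < y i₁ := lt_of_le_of_ne (hy0 i₁) (Ne.symm hi₁)
    have hsup : ∀ i, y i / P q i ≤ c := by
      intro i
      rw [hcdef]
      exact Finset.le_sup' (fun i => y i / P q i) (Finset.mem_univ i)
    have hcpos : 0 < c := lt_of_lt_of_le (div_pos hyi₁ (hx i₁)) (hsup i₁)
    have hyc : y ≤ c • P q := by
      intro i
      rw [Pi.smul_apply, smul_eq_mul]
      exact (div_le_iff₀ (hx i)).mp (hsup i)
    have hyj : y j = c * P q j := by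
      rw [hj]
      exact (div_mul_cancel₀ _ (hx j).ne').symm
    have h2 : Tinf y j ≤ Tinf (c • P q) j := hTinf_mono y (c • P q) hy0 hyc j
    have h3 : Tinf (c • P q) j = c * Tinf (P q) j := hTinf_homog (P q) (hPnn q hq) c hcpos j
    have h4 : Tinf (P q) j ≤ T (P q) j := by
      have h5 := hTinf_le (P q) (hPnn q hq) 1 one_pos j
      simpa using h5
    have h5 : Tinf y j = μ * y j := by
      rw [hyeig, Pi.smul_apply, smul_eq_mul]
    have h6 : μ * (c * P q j) ≤ (1 / U q) * (c * P q j) := by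
      have hc1 : μ * (c * P q j) ≤ c * T (P q) j := by
        calc μ * (c * P q j) = μ * y j := by rw [hyj]
          _ = Tinf y j := h5.symm
          _ ≤ Tinf (c • P q) j := h2
          _ = c * Tinf (P q) j := h3
          _ ≤ c * T (P q) j := mul_le_mul_of_nonneg_left h4 hcpos.le
      have hc2 : c * T (P q) j = (1 / U q) * (c * P q j) := by
        rw [hTP q hq j]
        ring
      linarith
    have h7 : 0 < c * P q j := mul_pos hcpos (hx j)
    exact le_of_mul_le_mul_right h6 h7
  have hSbdd : BddAbove {μ : ℝ | 0 ≤ μ ∧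
      ∃ x : Fin N → ℝ, 0 ≤ x ∧ x ≠ 0 ∧ Tinf x = μ • x} :=
    ⟨1 / U 1, fun μ hμ => hSb μ hμ 1 one_pos⟩
  have hUle : ∀ q : ℝ, 0 < q → U q ≤ 1 / laminf := by
    intro q hq
    have h1 : laminf ≤ 1 / U q := by
      rw [hrad]
      exact Real.sSup_le (fun μ hμ => hSb μ hμ q hq) (one_div_pos.mpr (hUpos q hq)).le
    rw [le_div_iff₀ hlaminf_pos]
    calc U q * laminf ≤ U q * (1 / U q) := mul_le_mul_of_nonneg_left h1 (hUpos q hq).le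
      _ = 1 := by field_simp [(hUpos q hq).ne']
  -- U is monotone
  have hUmono : ∀ q q' : ℝ, 0 < q → q ≤ q' → U q ≤ U q' := by
    intro q q' hq hqq
    by_contra hcon
    push_neg at hcon
    have hq' : 0 < q' := lt_of_lt_of_le hq hqq
    have hx := hPpos q hq
    have hx' := hPpos q' hq'
    obtain ⟨j, -, hj⟩ := Finset.exists_mem_eq_sup' hne (fun i => P q' i / P q i)
    set c := Finset.univ.sup' hne (fun i => P q' i / P q i) with hcdef
    have hsup : ∀ i, P q' i / P q i ≤ c := by
      intro i
      rw [hcdef]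
      exact Finset.le_sup' (fun i => P q' i / P q i) (Finset.mem_univ i)
    have hcpos : 0 < c := lt_of_lt_of_le (div_pos (hx' i₀) (hx i₀)) (hsup i₀)
    have hle : ∀ i, P q' i ≤ c * P q i := by
      intro i
      exact (div_le_iff₀ (hx i)).mp (hsup i)
    have hPq'j : P q' j = c * P q j := by
      rw [hj]
      exact (div_mul_cancel₀ _ (hx j).ne').symm
    rcases le_or_gt c 1 with hc1 | hc1
    · have hPP : P q' ≤ P q := by
        intro i
        calc P q' i ≤ c * P q i := hle i
          _ ≤ 1 * P q i := mul_le_mul_of_nonneg_right hc1 (hx i).le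
          _ = P q i := one_mul _
      have hstrict : P q' j < P q j := by
        calc P q' j = U q' * T (P q') j := hfixc q' hq' j
          _ < U q * T (P q') j :=
              mul_lt_mul_of_pos_right hcon (hpos (P q') (hPnn q' hq') j)
          _ ≤ U q * T (P q) j :=
              mul_le_mul_of_nonneg_left (hmono (P q') (P q) (hPnn q' hq') hPP j) (hUpos q hq).le
          _ = P q j := (hfixc q hq j).symm
      have hc1' : c < 1 := by
        rw [hPq'j] at hstrict
        nlinarith [hx j]
      have hnorm : q' ≤ c * q := by
        have h1 : νa (P q') ≤ νa (c • P q) := by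
          apply hνam _ _ (hPnn q' hq')
          intro i
          rw [Pi.smul_apply, smul_eq_mul]
          exact hle i
        rwa [hνas, abs_of_pos hcpos, hPnorm q hq, hPnorm q' hq'] at h1
      nlinarith
    · have h2 : T (P q') j ≤ T (c • P q) j := by
        apply hmono _ _ (hPnn q' hq') ?_ j
        intro i
        rw [Pi.smul_apply, smul_eq_mul]
        exact hle i
      have h3 : T (c • P q) j < c * T (P q) j := hscal (P q) (hPnn q hq) c hc1 j
      have h5 : P q' j < c * P q j := by
        calc P q' j = U q' * T (P q') j := hfixc q' hq' j
          _ ≤ U q' * T (c • P q) j := mul_le_mul_of_nonneg_left h2 (hUpos q' hq').le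
          _ < U q' * (c * T (P q) j) := mul_lt_mul_of_pos_left h3 (hUpos q' hq')
          _ ≤ U q * (c * T (P q) j) := by
              apply mul_le_mul_of_nonneg_right hcon.le
              have h6 := hpos (P q) (hPnn q hq) j
              positivity
          _ = c * (U q * T (P q) j) := by ring
          _ = c * P q j := by rw [← hfixc q hq j]
      rw [hPq'j] at h5
      exact lt_irrefl _ h5
  -- the supremum of U and convergence to it
  have himg_ne : (U '' Set.Ioi (0:ℝ)).Nonempty := ⟨U 1, ⟨1, Set.mem_Ioi.mpr one_pos, rfl⟩⟩
  have himg_bdd : BddAbove (U '' Set.Ioi (0:ℝ)) := by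
    refine ⟨1 / laminf, ?_⟩
    rintro u ⟨q, hq, rfl⟩
    exact hUle q (Set.mem_Ioi.mp hq)
  set Ustar := sSup (U '' Set.Ioi (0:ℝ)) with hUstar
  have hUstar_ge : ∀ q : ℝ, 0 < q → U q ≤ Ustar := fun q hq =>
    le_csSup himg_bdd ⟨q, Set.mem_Ioi.mpr hq, rfl⟩
  have hUstar_pos : 0 < Ustar := lt_of_lt_of_le (hUpos 1 one_pos) (hUstar_ge 1 one_pos)
  have hUstar_le : Ustar ≤ 1 / laminf :=
    csSup_le himg_ne (by rintro u ⟨q, hq, rfl⟩; exact hUle q (Set.mem_Ioi.mp hq))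
  have hUtendsto : Tendsto U atTop (𝓝 Ustar) := by
    rw [Metric.tendsto_atTop]
    intro ε hε
    obtain ⟨u, ⟨q₀, hq₀, rfl⟩, hu⟩ :=
      exists_lt_of_lt_csSup himg_ne (by linarith : Ustar - ε < Ustar)
    refine ⟨max q₀ 1, fun q hq => ?_⟩
    have hq1 : (1:ℝ) ≤ q := le_trans (le_max_right _ _) hq
    have hqpos : (0:ℝ) < q := lt_of_lt_of_le one_pos hq1
    have h1 : U q₀ ≤ U q := hUmono q₀ q (Set.mem_Ioi.mp hq₀) (le_trans (le_max_left _ _) hq)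
    have h2 : U q ≤ Ustar := hUstar_ge q hqpos
    rw [Real.dist_eq, abs_of_nonpos (by linarith)]
    linarith
  -- the normalized sequence of solutions and its convergent subsequence
  set Cv : Fin N → ℝ := fun i => (νa (Pi.single i 1))⁻¹ with hCv
  set xseq : ℕ → Fin N → ℝ := fun n => ((n : ℝ) + 1)⁻¹ • P ((n : ℝ) + 1) with hxseqdef
  have hqn : ∀ n : ℕ, (0:ℝ) < (n:ℝ) + 1 := fun n => by positivity
  have hxseq_nn : ∀ n, (0 : Fin N → ℝ) ≤ xseq n := by
    intro n i
    simp only [hxseqdef, Pi.smul_apply, smul_eq_mul]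
    exact mul_nonneg (by positivity) (hPpos _ (hqn n) i).le
  have hxseq_mem : ∀ n, xseq n ∈ Set.Icc (0 : Fin N → ℝ) Cv := by
    intro n
    refine ⟨hxseq_nn n, ?_⟩
    intro i
    simp only [hxseqdef, hCv, Pi.smul_apply, smul_eq_mul]
    have hνi := nu_single_pos hνa0 hνas hνat i
    have h1 : P ((n:ℝ)+1) i * νa (Pi.single i 1) ≤ (n:ℝ)+1 := by
      have h2 := nu_coord hνas hνam (hPnn _ (hqn n)) i
      rwa [hPnorm _ (hqn n)] at h2
    have h2 : P ((n:ℝ)+1) i ≤ ((n:ℝ)+1) * (νa (Pi.single i 1))⁻¹ := by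
      rw [← div_eq_mul_inv, le_div_iff₀ hνi]
      exact h1
    calc ((n:ℝ)+1)⁻¹ * P ((n:ℝ)+1) i
        ≤ ((n:ℝ)+1)⁻¹ * (((n:ℝ)+1) * (νa (Pi.single i 1))⁻¹) :=
          mul_le_mul_of_nonneg_left h2 (by positivity)
      _ = (νa (Pi.single i 1))⁻¹ := by
          rw [← mul_assoc, inv_mul_cancel₀ (hqn n).ne', one_mul]
  obtain ⟨xstar, hxstar_mem, φ, hφ, hconv⟩ :=
    (isCompact_Icc : IsCompact (Set.Icc (0 : Fin N → ℝ) Cv)).tendsto_subseq hxseq_mem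
  have hxstar_nn : (0 : Fin N → ℝ) ≤ xstar := hxstar_mem.1
  set qk : ℕ → ℝ := fun k => ((φ k : ℕ) : ℝ) + 1 with hqkdef
  have hqk_pos : ∀ k, 0 < qk k := fun k => by positivity
  have hqk_tendsto : Tendsto qk atTop atTop := by
    apply tendsto_atTop_mono (fun k => ?_) tendsto_natCast_atTop_atTop
    have h2 : (k:ℝ) ≤ ((φ k : ℕ) : ℝ) := Nat.cast_le.mpr hφ.le_apply
    simp only [hqkdef]
    linarith
  have hUk : Tendsto (fun k => U (qk k)) atTop (𝓝 Ustar) := hUtendsto.comp hqk_tendsto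
  have hPx : ∀ k, qk k • xseq (φ k) = P (qk k) := by
    intro k
    simp only [hxseqdef, hqkdef, smul_smul]
    rw [mul_inv_cancel₀ (hqk_pos k).ne', one_smul]
  have hxk_i : ∀ i, Tendsto (fun k => xseq (φ k) i) atTop (𝓝 (xstar i)) :=
    fun i => tendsto_pi_nhds.mp hconv i
  have hνa_xseq : ∀ k : ℕ, νa (xseq (φ k)) = 1 := by
    intro k
    simp only [hxseqdef]
    rw [hνas, abs_of_pos (by positivity), hPnorm _ (hqn (φ k)),
      inv_mul_cancel₀ (hqn (φ k)).ne']
  have hνa_xstar : νa xstar = 1 := by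
    have h1 : Tendsto (fun k => νa (xseq (φ k))) atTop (𝓝 (νa xstar)) :=
      nu_tendsto hνas hνat hconv
    have h2 : Tendsto (fun k => νa (xseq (φ k))) atTop (𝓝 1) := by
      simp only [hνa_xseq]
      exact tendsto_const_nhds
    exact tendsto_nhds_unique h1 h2
  have hxstar_ne : xstar ≠ 0 := by
    intro h
    rw [h, nu_zero hνas] at hνa_xstar
    norm_num at hνa_xstar
  have hform : ∀ k i, xseq (φ k) i / U (qk k) = T (P (qk k)) i / qk k := by
    intro k i
    rw [hTP _ (hqk_pos k) i, ← hPx k]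
    rw [Pi.smul_apply, smul_eq_mul]
    rw [div_div]
    field_simp [(hqk_pos k).ne', (hUpos _ (hqk_pos k)).ne']
  have hAlim : ∀ i, Tendsto (fun k => xseq (φ k) i / U (qk k)) atTop (𝓝 (xstar i / Ustar)) :=
    fun i => (hxk_i i).div hUk hUstar_pos.ne'
  -- lower bound : x*/U* ≤ Tinf x*
  have hB : ∀ i, xstar i / Ustar ≤ Tinf xstar i := by
    intro i
    have hstep : ∀ h : ℝ, 0 < h → xstar i / Ustar ≤ T (h • xstar) i / h := by
      intro h hh
      have hsm : Tendsto (fun k => h • xseq (φ k)) atTop (𝓝 (h • xstar)) := hconv.const_smul h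
      have hin : Tendsto (fun k => h • xseq (φ k)) atTop
          (𝓝[{x : Fin N → ℝ | 0 ≤ x}] (h • xstar)) := by
        rw [tendsto_nhdsWithin_iff]
        exact ⟨hsm, Eventually.of_forall fun k => smul_nonneg hh.le (hxseq_nn (φ k))⟩
      have hT : Tendsto (fun k => T (h • xseq (φ k))) atTop (𝓝 (T (h • xstar))) :=
        (hcont (h • xstar) (smul_nonneg hh.le hxstar_nn)).tendsto.comp hin
      have hTi : Tendsto (fun k => T (h • xseq (φ k)) i / h) atTop (𝓝 (T (h • xstar) i / h)) :=
        (tendsto_pi_nhds.mp hT i).div_const h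
      refine le_of_tendsto_of_tendsto (hAlim i) hTi ?_
      filter_upwards [hqk_tendsto.eventually_ge_atTop h] with k hk
      show xseq (φ k) i / U (qk k) ≤ T (h • xseq (φ k)) i / h
      rw [hform k i, ← hPx k]
      exact hanti (xseq (φ k)) (hxseq_nn (φ k)) h (qk k) hh hk i
    refine ge_of_tendsto (hTinf xstar hxstar_nn i) ?_
    filter_upwards [eventually_ge_atTop (1:ℝ)] with h hh
    exact hstep h (lt_of_lt_of_le one_pos hh)
  -- upper bound : Tinf x* ≤ x*/U*
  have hA : ∀ i, Tinf xstar i ≤ xstar i / Ustar := by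
    intro i
    have key : ∀ ε : ℝ, 0 < ε → ε < 1 → (1 - ε) * Tinf xstar i ≤ xstar i / Ustar := by
      intro ε hε hε1
      have hev : ∀ᶠ k in atTop, ∀ j, (1 - ε) * xstar j ≤ xseq (φ k) j := by
        rw [eventually_all]
        intro j
        rcases eq_or_lt_of_le (hxstar_nn j) with hj | hj
        · filter_upwards with k
          rw [← hj]
          simpa using hxseq_nn (φ k) j
        · have hlt : (1 - ε) * xstar j < xstar j := by nlinarith [mul_pos hε hj]
          exact (hxk_i j).eventually (eventually_ge_nhds hlt)
      have hev2 : ∀ᶠ k in atTop, (1 - ε) * Tinf xstar i ≤ xseq (φ k) i / U (qk k) := by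
        filter_upwards [hev] with k hk
        rw [hform k i]
        have hq := hqk_pos k
        have h1 : ((1 - ε) • xstar) ≤ xseq (φ k) := by
          intro j
          rw [Pi.smul_apply, smul_eq_mul]
          exact hk j
        have h2 : (0 : Fin N → ℝ) ≤ (1 - ε) • xstar :=
          smul_nonneg (by linarith) hxstar_nn
        have h3 : T (qk k • ((1 - ε) • xstar)) i ≤ T (P (qk k)) i := by
          rw [← hPx k]
          exact hmono _ _ (smul_nonneg hq.le h2)
            (smul_le_smul_of_nonneg_left h1 hq.le) i
        have h4 : qk k • ((1 - ε) • xstar) = (qk k * (1 - ε)) • xstar := smul_smul _ _ _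
        have h5 : 0 < qk k * (1 - ε) := by nlinarith
        have h6 : Tinf xstar i ≤ T ((qk k * (1 - ε)) • xstar) i / (qk k * (1 - ε)) :=
          hTinf_le xstar hxstar_nn _ h5 i
        have h7 : (1 - ε) * Tinf xstar i
            ≤ (1 - ε) * (T ((qk k * (1 - ε)) • xstar) i / (qk k * (1 - ε))) :=
          mul_le_mul_of_nonneg_left h6 (by linarith)
        have h8 : (1 - ε) * (T ((qk k * (1 - ε)) • xstar) i / (qk k * (1 - ε)))
            = T ((qk k * (1 - ε)) • xstar) i / qk k := by
          field_simp [(by linarith : (0:ℝ) < 1 - ε).ne']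
        have h9 : T ((qk k * (1 - ε)) • xstar) i / qk k ≤ T (P (qk k)) i / qk k := by
          rw [h4] at h3
          exact (div_le_div_iff_of_pos_right hq).mpr h3
        linarith
      exact ge_of_tendsto (hAlim i) hev2
    by_contra hcon
    push_neg at hcon
    have hB0 : 0 ≤ xstar i / Ustar := div_nonneg (hxstar_nn i) hUstar_pos.le
    have hTpos : 0 < Tinf xstar i := lt_of_le_of_lt hB0 hcon
    have hεpos : 0 < (Tinf xstar i - xstar i / Ustar) / (2 * Tinf xstar i) :=
      div_pos (by linarith) (by linarith)
    have hεlt : (Tinf xstar i - xstar i / Ustar) / (2 * Tinf xstar i) < 1 := by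
      rw [div_lt_one (by linarith)]
      linarith
    have hk2 := key _ hεpos hεlt
    have hexp : (1 - (Tinf xstar i - xstar i / Ustar) / (2 * Tinf xstar i)) * Tinf xstar i
        = Tinf xstar i - (Tinf xstar i - xstar i / Ustar) / 2 := by
      field_simp
    rw [hexp] at hk2
    linarith
  -- x* is an eigenvector of Tinf with eigenvalue 1/U*
  have heig : Tinf xstar = (1 / Ustar) • xstar := by
    funext i
    have h3 : xstar i / Ustar = (1 / Ustar) * xstar i := by ring
    rw [Pi.smul_apply, smul_eq_mul, ← h3]
    exact le_antisymm (hA i) (hB i)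
  have hmem : (1 / Ustar) ∈ {μ : ℝ | 0 ≤ μ ∧
      ∃ x : Fin N → ℝ, 0 ≤ x ∧ x ≠ 0 ∧ Tinf x = μ • x} :=
    ⟨(one_div_pos.mpr hUstar_pos).le, xstar, hxstar_nn, hxstar_ne, heig⟩
  have hlam_ge : 1 / Ustar ≤ laminf := by
    rw [hrad]
    exact le_csSup hSbdd hmem
  have hUeq : Ustar = 1 / laminf := by
    refine le_antisymm hUstar_le ?_
    rw [div_le_iff₀ hlaminf_pos]
    rw [div_le_iff₀ hUstar_pos] at hlam_ge
    calc (1:ℝ) ≤ laminf * Ustar := hlam_ge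
      _ = Ustar * laminf := mul_comm _ _
  have hpart1 : IsLUB (U '' Set.Ioi (0:ℝ)) (1 / laminf) ∧ Tendsto U atTop (𝓝 (1 / laminf)) := by
    rw [← hUeq]
    exact ⟨isLUB_csSup himg_ne himg_bdd, hUtendsto⟩
  -- Part 2 : the efficiency function
  have hT0_nn : (0 : Fin N → ℝ) ≤ T 0 := fun i => (hpos 0 le_rfl i).le
  have hT0_ne : T 0 ≠ 0 := by
    intro h
    have h1 := hpos 0 le_rfl i₀
    rw [h] at h1
    simp at h1
  have hT0_pos : 0 < νb (T 0) := nu_pos hνb0 hνbs hνbt hT0_ne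
  have hTPq_pos : ∀ q : ℝ, 0 < q → 0 < νb (T (P q)) := by
    intro q hq
    apply nu_pos hνb0 hνbs hνbt
    intro h
    have h1 := hpos (P q) (hPnn q hq) i₀
    rw [h] at h1
    simp at h1
  have hE' : ∀ q : ℝ, 0 < q → E q = 1 / νb (T (P q)) := by
    intro q hq
    rw [hE q]
    have h1 : νb (P q) = U q * νb (T (P q)) := by
      conv_lhs => rw [(hsol q hq).2.2.1]
      rw [hνbs, abs_of_pos (hUpos q hq)]
    rw [h1, div_mul_eq_div_div, div_self (hUpos q hq).ne']
  have hEub : ∀ q : ℝ, 0 < q → E q ≤ 1 / νb (T 0) := by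
    intro q hq
    rw [hE' q hq]
    apply one_div_le_one_div_of_le hT0_pos
    exact hνbm _ _ hT0_nn (hmono 0 (P q) le_rfl (hPnn q hq))
  have hPlim : Tendsto P (nhdsWithin (0:ℝ) (Set.Ioi 0)) (𝓝 (0 : Fin N → ℝ)) := by
    rw [tendsto_pi_nhds]
    intro i
    simp only [Pi.zero_apply]
    have hνi := nu_single_pos hνa0 hνas hνat i
    apply squeeze_zero' (g := fun q : ℝ => q * (νa (Pi.single i 1))⁻¹)
    · filter_upwards [eventually_mem_nhdsWithin] with q hq
      exact (hPpos q hq i).le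
    · filter_upwards [eventually_mem_nhdsWithin] with q hq
      have h1 : P q i * νa (Pi.single i 1) ≤ q := by
        have h2 := nu_coord hνas hνam (hPnn q hq) i
        rwa [hPnorm q hq] at h2
      rw [← div_eq_mul_inv, le_div_iff₀ hνi]
      exact h1
    · have h2 : Tendsto (fun q : ℝ => q * (νa (Pi.single i 1))⁻¹)
          (nhdsWithin (0:ℝ) (Set.Ioi 0)) (𝓝 (0 * (νa (Pi.single i 1))⁻¹)) :=
        (tendsto_id.mono_left nhdsWithin_le_nhds).mul_const _
      simpa using h2
  have hTlim : Tendsto (fun q => T (P q)) (nhdsWithin (0:ℝ) (Set.Ioi 0)) (𝓝 (T 0)) := by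
    have hin : Tendsto P (nhdsWithin (0:ℝ) (Set.Ioi 0)) (𝓝[{x : Fin N → ℝ | 0 ≤ x}] 0) := by
      rw [tendsto_nhdsWithin_iff]
      refine ⟨hPlim, ?_⟩
      filter_upwards [eventually_mem_nhdsWithin] with q hq
      exact hPnn q hq
    have hmem0 : (0 : Fin N → ℝ) ∈ {x : Fin N → ℝ | 0 ≤ x} := by
      simp only [Set.mem_setOf_eq]
      exact le_rfl
    exact (hcont 0 hmem0).tendsto.comp hin
  have hνblim : Tendsto (fun q => νb (T (P q))) (nhdsWithin (0:ℝ) (Set.Ioi 0)) (𝓝 (νb (T 0))) :=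
    nu_tendsto hνbs hνbt hTlim
  have hElim : Tendsto E (nhdsWithin (0:ℝ) (Set.Ioi 0)) (𝓝 (1 / νb (T 0))) := by
    have h1 : Tendsto (fun q => 1 / νb (T (P q))) (nhdsWithin (0:ℝ) (Set.Ioi 0))
        (𝓝 (1 / νb (T 0))) := tendsto_const_nhds.div hνblim hT0_pos.ne'
    refine Tendsto.congr' ?_ h1
    filter_upwards [eventually_mem_nhdsWithin] with q hq
    exact (hE' q hq).symm
  have hpart2 : IsLUB (E '' Set.Ioi (0:ℝ)) (1 / νb (T 0)) := by
    constructor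
    · rintro u ⟨q, hq, rfl⟩
      exact hEub q hq
    · intro b hb
      refine le_of_tendsto hElim ?_
      filter_upwards [eventually_mem_nhdsWithin] with q hq
      exact hb ⟨q, hq, rfl⟩
  exact ⟨hpart1, hpart2, hElim⟩
end

section
/- Let T : ℝ^N_+ → ℝ^N_{++} be a continuous SI mapping, ‖·‖_a a monotone norm on ℝ^N, and suppose λ_∞ := ρ(T_∞) > 0, where T_∞ is the asymptotic mapping of T. Suppose for each p̄ > 0 the pair (P(p̄), U(p̄)) ∈ ℝ^N_{++} × ℝ_{++} satisfies P(p̄) = U(p̄) T(P(p̄)) and ‖P(p̄)‖_a = p̄. Then for every p̄ > 0: U(p̄) ≤ p̄/‖T(0)‖_a if p̄ ≤ ‖T(0)‖_a/λ_∞, and U(p̄) ≤ 1/λ_∞ otherwise; equivalently, U(p̄) ≤ min{ p̄/‖T(0)‖_a , 1/λ_∞ } for all p̄ > 0. -/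
open Filter Topology

/-- Upper bound on the utility function of the canonical max-min
utility problem: U(p̄) ≤ p̄/‖T(0)‖_a for p̄ ≤ ‖T(0)‖_a/λ_∞ and U(p̄) ≤ 1/λ_∞
otherwise; equivalently U(p̄) ≤ min{p̄/‖T(0)‖_a, 1/λ_∞}. -/
theorem stmt14 {N : ℕ} (T : (Fin N → ℝ) → (Fin N → ℝ))
    (hpos : ∀ x : Fin N → ℝ, 0 ≤ x → ∀ i, 0 < T x i)
    (hmono : ∀ x y : Fin N → ℝ, 0 ≤ x → x ≤ y → T x ≤ T y)
    (hscal : ∀ x : Fin N → ℝ, 0 ≤ x → ∀ α : ℝ, 1 < α → ∀ i, T (α • x) i < α * T x i)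
    (hcont : ContinuousOn T {x : Fin N → ℝ | 0 ≤ x})
    (νa : (Fin N → ℝ) → ℝ)
    (hνa0 : ∀ x, νa x = 0 ↔ x = 0)
    (hνas : ∀ (a : ℝ) (x : Fin N → ℝ), νa (a • x) = |a| * νa x)
    (hνat : ∀ x y : Fin N → ℝ, νa (x + y) ≤ νa x + νa y)
    (hνam : ∀ x y : Fin N → ℝ, 0 ≤ x → x ≤ y → νa x ≤ νa y)
    (Tinf : (Fin N → ℝ) → (Fin N → ℝ))
    (hTinf : ∀ x : Fin N → ℝ, 0 ≤ x → ∀ i,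
      Tendsto (fun h : ℝ => T (h • x) i / h) atTop (nhds (Tinf x i)))
    (laminf : ℝ)
    (hrad : laminf = sSup {μ : ℝ | 0 ≤ μ ∧
      ∃ x : Fin N → ℝ, 0 ≤ x ∧ x ≠ 0 ∧ Tinf x = μ • x})
    (hlaminf_pos : 0 < laminf)
    (P : ℝ → Fin N → ℝ) (U : ℝ → ℝ)
    (hsol : ∀ q : ℝ, 0 < q →
      (∀ i, 0 < P q i) ∧ 0 < U q ∧ P q = U q • T (P q) ∧ νa (P q) = q) :
    ∀ q : ℝ, 0 < q →
      (q ≤ νa (T 0) / laminf → U q ≤ q / νa (T 0)) ∧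
      (νa (T 0) / laminf < q → U q ≤ 1 / laminf) ∧
      U q ≤ min (q / νa (T 0)) (1 / laminf) := by

  intro q hq
  obtain ⟨hPpos, hUpos, hPeq, hPnorm⟩ := hsol q hq
  -- ν is nonnegative
  have hνann : ∀ x : Fin N → ℝ, 0 ≤ νa x := by
    intro x
    have h0 : νa (0 : Fin N → ℝ) = 0 := (hνa0 0).mpr rfl
    have hx0 : x + (-1 : ℝ) • x = 0 := by ext i; simp
    have ht := hνat x ((-1 : ℝ) • x)
    rw [hx0, h0, hνas] at ht
    simp only [abs_neg, abs_one, one_mul] at ht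
    linarith
  -- N is positive (otherwise the eigenvalue set is empty)
  have hNpos : 0 < N := by
    rcases Nat.eq_zero_or_pos N with hN | hN
    · exfalso
      subst hN
      have hemp : {μ : ℝ | 0 ≤ μ ∧
          ∃ x : Fin 0 → ℝ, 0 ≤ x ∧ x ≠ 0 ∧ Tinf x = μ • x} = ∅ := by
        ext μ
        simp only [Set.mem_setOf_eq, Set.mem_empty_iff_false, iff_false, not_and]
        rintro _ ⟨x, _, hxne, _⟩
        exact hxne (funext fun i => i.elim0)
      rw [hrad, hemp, Real.sSup_empty] at hlaminf_pos
      exact lt_irrefl 0 hlaminf_pos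
    · exact hN
  have hT0pos : 0 < νa (T 0) := by
    rcases lt_or_eq_of_le (hνann (T 0)) with h | h
    · exact h
    · exfalso
      have hT0 : T 0 = 0 := (hνa0 (T 0)).mp h.symm
      have := hpos 0 le_rfl ⟨0, hNpos⟩
      rw [hT0] at this
      exact lt_irrefl 0 this
  -- First bound: U q ≤ q / νa (T 0)
  have hge : U q • T 0 ≤ P q := by
    have hm : T 0 ≤ T (P q) := hmono 0 (P q) le_rfl (fun i => (hPpos i).le)
    intro i
    have : U q * T 0 i ≤ U q * T (P q) i :=
      mul_le_mul_of_nonneg_left (hm i) hUpos.le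
    calc (U q • T 0) i = U q * T 0 i := rfl
      _ ≤ U q * T (P q) i := this
      _ = (U q • T (P q)) i := rfl
      _ = P q i := by rw [← hPeq]
  have hU1 : U q ≤ q / νa (T 0) := by
    have h1 : νa (U q • T 0) ≤ νa (P q) :=
      hνam _ _ (fun i => mul_nonneg hUpos.le (hpos 0 le_rfl i).le) hge
    rw [hνas, abs_of_pos hUpos, hPnorm] at h1
    rw [le_div_iff₀ hT0pos]
    linarith [h1]
  -- Key lemma: Tinf x i ≤ T (c • x) i / c
  have hTinf_le : ∀ x : Fin N → ℝ, 0 ≤ x → ∀ c : ℝ, 0 < c → ∀ i,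
      Tinf x i ≤ T (c • x) i / c := by
    intro x hx c hc i
    refine le_of_tendsto (hTinf x hx i) ?_
    filter_upwards [eventually_ge_atTop (c + 1)] with h hh
    have hhc : c < h := lt_of_lt_of_le (lt_add_one c) hh
    have hh0 : (0 : ℝ) < h := hc.trans hhc
    have hcx : (0 : Fin N → ℝ) ≤ c • x := fun j => mul_nonneg hc.le (hx j)
    have hα : 1 < h / c := (one_lt_div hc).mpr hhc
    have hstrict := hscal (c • x) hcx (h / c) hα i
    have hrw : (h / c) • (c • x) = h • x := by
      rw [smul_smul]
      congr 1
      field_simp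
    rw [hrw] at hstrict
    rw [div_le_div_iff₀ hh0 hc]
    have h2 := mul_le_mul_of_nonneg_right hstrict.le hc.le
    calc T (h • x) i * c ≤ (h / c * T (c • x) i) * c := h2
      _ = T (c • x) i * h := by field_simp
  -- Second bound: U q ≤ 1 / laminf
  have hU2 : U q ≤ 1 / laminf := by
    have hsup : laminf ≤ 1 / U q := by
      rw [hrad]
      apply Real.sSup_le
      · rintro μ ⟨hμ0, x, hx0, hxne, hxeig⟩
        obtain ⟨j, hj⟩ : ∃ j, 0 < x j := by
          by_contra hcon
          push_neg at hcon
          exact hxne (funext fun i => le_antisymm (hcon i) (hx0 i))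
        classical
        set s := Finset.univ.filter (fun i => 0 < x i) with hs_def
        have hs : s.Nonempty := ⟨j, by simp [hs_def, hj]⟩
        obtain ⟨i0, hi0s, hi0min⟩ := s.exists_min_image (fun i => P q i / x i) hs
        have hxi0 : 0 < x i0 := by
          have := hi0s
          rw [hs_def, Finset.mem_filter] at this
          exact this.2
        set c := P q i0 / x i0 with hc_def
        have hc : 0 < c := div_pos (hPpos i0) hxi0
        have hcx_le : c • x ≤ P q := by
          intro i
          rcases (hx0 i).lt_or_eq with hlt | heq
          · have hxi : 0 < x i := hlt
            have hle : c ≤ P q i / x i := hi0min i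
              (by rw [hs_def, Finset.mem_filter]; exact ⟨Finset.mem_univ i, hxi⟩)
            have : c * x i ≤ (P q i / x i) * x i :=
              mul_le_mul_of_nonneg_right hle (hx0 i)
            calc (c • x) i = c * x i := rfl
              _ ≤ (P q i / x i) * x i := this
              _ = P q i := div_mul_cancel₀ _ (ne_of_gt hxi)
          · have hxi : x i = 0 := heq.symm
            have : (c • x) i = 0 := by
              show c * x i = 0
              rw [hxi, mul_zero]
            rw [this]
            exact (hPpos i).le
        have hkey : Tinf x i0 ≤ T (P q) i0 / c := by
          have h1 : Tinf x i0 ≤ T (c • x) i0 / c := hTinf_le x hx0 c hc i0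
          have h2 : T (c • x) i0 ≤ T (P q) i0 :=
            hmono (c • x) (P q) (fun i => mul_nonneg hc.le (hx0 i)) hcx_le i0
          calc Tinf x i0 ≤ T (c • x) i0 / c := h1
            _ ≤ T (P q) i0 / c := by gcongr
        have hTP : T (P q) i0 = P q i0 / U q := by
          have heq := congrFun hPeq i0
          have : P q i0 = U q * T (P q) i0 := heq
          field_simp
          linarith
        have heig : Tinf x i0 = μ * x i0 := by
          rw [hxeig]; rfl
        have hmain : μ * x i0 ≤ x i0 / U q := by
          have hrhs : T (P q) i0 / c = x i0 / U q := by
            rw [hTP, hc_def]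
            field_simp [(hPpos i0).ne', hUpos.ne', hxi0.ne']
          rw [heig, hrhs] at hkey
          exact hkey
        rw [le_div_iff₀ hUpos]
        have h2 := mul_le_mul_of_nonneg_right hmain hUpos.le
        rw [div_mul_cancel₀ _ hUpos.ne'] at h2
        nlinarith [hxi0]
      · positivity
    rw [le_div_iff₀ hlaminf_pos]
    have h3 := mul_le_mul_of_nonneg_right hsup hUpos.le
    rw [one_div, inv_mul_cancel₀ hUpos.ne'] at h3
    nlinarith
  exact ⟨fun _ => hU1, fun _ => hU2, le_min hU1 hU2⟩
end

section
/- Let T : ℝ^N_+ → ℝ^N_{++} be a continuous SI mapping, ‖·‖_a and ‖·‖_b monotone norms on ℝ^N, and suppose λ_∞ := ρ(T_∞) > 0, where T_∞ is the asymptotic mapping of T. Suppose for each p̄ > 0 the pair (P(p̄), U(p̄)) ∈ ℝ^N_{++} × ℝ_{++} satisfies P(p̄) = U(p̄) T(P(p̄)) and ‖P(p̄)‖_a = p̄, and set E(p̄) := U(p̄)/‖P(p̄)‖_b. Let α > 0 be any scalar with ‖x‖_a ≤ α‖x‖_b for all x ∈ ℝ^N. Then for every p̄ > 0: E(p̄)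 ≤ min{ 1/‖T(0)‖_b , α/(λ_∞ p̄) }. -/
open Filter Topology

/-- Upper bound on the ‖·‖_b-efficiency of the canonical max-min
utility problem: E(p̄) ≤ min{1/‖T(0)‖_b, α/(λ_∞ p̄)} for every p̄ > 0, where
α > 0 satisfies ‖x‖_a ≤ α‖x‖_b for all x. -/
theorem stmt15 {N : ℕ} (T : (Fin N → ℝ) → (Fin N → ℝ))
    (hpos : ∀ x : Fin N → ℝ, 0 ≤ x → ∀ i, 0 < T x i)
    (hmono : ∀ x y : Fin N → ℝ, 0 ≤ x → x ≤ y → T x ≤ T y)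
    (hscal : ∀ x : Fin N → ℝ, 0 ≤ x → ∀ α : ℝ, 1 < α → ∀ i, T (α • x) i < α * T x i)
    (hcont : ContinuousOn T {x : Fin N → ℝ | 0 ≤ x})
    (νa νb : (Fin N → ℝ) → ℝ)
    (hνa0 : ∀ x, νa x = 0 ↔ x = 0)
    (hνas : ∀ (a : ℝ) (x : Fin N → ℝ), νa (a • x) = |a| * νa x)
    (hνat : ∀ x y : Fin N → ℝ, νa (x + y) ≤ νa x + νa y)
    (hνam : ∀ x y : Fin N → ℝ, 0 ≤ x → x ≤ y → νa x ≤ νa y)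
    (hνb0 : ∀ x, νb x = 0 ↔ x = 0)
    (hνbs : ∀ (a : ℝ) (x : Fin N → ℝ), νb (a • x) = |a| * νb x)
    (hνbt : ∀ x y : Fin N → ℝ, νb (x + y) ≤ νb x + νb y)
    (hνbm : ∀ x y : Fin N → ℝ, 0 ≤ x → x ≤ y → νb x ≤ νb y)
    (Tinf : (Fin N → ℝ) → (Fin N → ℝ))
    (hTinf : ∀ x : Fin N → ℝ, 0 ≤ x → ∀ i,
      Tendsto (fun h : ℝ => T (h • x) i / h) atTop (nhds (Tinf x i)))
    (laminf : ℝ)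
    (hrad : laminf = sSup {μ : ℝ | 0 ≤ μ ∧
      ∃ x : Fin N → ℝ, 0 ≤ x ∧ x ≠ 0 ∧ Tinf x = μ • x})
    (hlaminf_pos : 0 < laminf)
    (P : ℝ → Fin N → ℝ) (U : ℝ → ℝ)
    (hsol : ∀ q : ℝ, 0 < q →
      (∀ i, 0 < P q i) ∧ 0 < U q ∧ P q = U q • T (P q) ∧ νa (P q) = q)
    (E : ℝ → ℝ) (hE : ∀ q : ℝ, E q = U q / νb (P q))
    (α : ℝ) (hα : 0 < α) (hab : ∀ x : Fin N → ℝ, νa x ≤ α * νb x) :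
    ∀ q : ℝ, 0 < q → E q ≤ min (1 / νb (T 0)) (α / (laminf * q)) := by
  intro q hq
  obtain ⟨hP, hU, hPeq, hPa⟩ := hsol q hq
  set p := P q with hp
  set u := U q with hu
  have hp0 : (0 : Fin N → ℝ) ≤ p := fun i => (hP i).le
  -- Nonempty Fin N
  have hNe : Nonempty (Fin N) := by
    by_contra hne
    rw [not_nonempty_iff] at hne
    have h0 : p = 0 := funext fun i => (hne.false i).elim
    rw [h0, (hνa0 0).mpr rfl] at hPa
    exact hq.ne hPa
  -- norms nonneg
  have hνbnn : ∀ x, 0 ≤ νb x := by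
    intro x
    have h1 : νb (x + (-1 : ℝ) • x) ≤ νb x + νb ((-1 : ℝ) • x) := hνbt _ _
    have h2 : x + (-1 : ℝ) • x = 0 := by simp
    rw [h2, (hνb0 0).mpr rfl, hνbs] at h1
    simp at h1
    linarith
  -- T p = (1/u) • p coordinatewise
  have hTp : ∀ i, T p i = p i / u := by
    intro i
    have := congrFun hPeq i
    simp only [Pi.smul_apply, smul_eq_mul] at this
    field_simp [this]
    rw [this]; ring
  -- νb (T 0) > 0
  have hT0pos : 0 < νb (T 0) := by
    rcases (hνbnn (T 0)).lt_or_eq with h | h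
    · exact h
    · exfalso
      have := (hνb0 (T 0)).mp h.symm
      exact (hpos 0 le_rfl hNe.some).ne' (congrFun this hNe.some)
  -- νb (T p) ≥ νb (T 0) > 0
  have hTpT0 : νb (T 0) ≤ νb (T p) :=
    hνbm _ _ (fun i => (hpos 0 le_rfl i).le) (hmono 0 p le_rfl hp0)
  have hTpb_pos : 0 < νb (T p) := lt_of_lt_of_le hT0pos hTpT0
  -- E q = 1 / νb (T p)
  have hνbp : νb p = u * νb (T p) := by
    conv_lhs => rw [hPeq]
    rw [hνbs, abs_of_pos hU]
  have hEq : E q = 1 / νb (T p) := by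
    rw [hE, hνbp]
    field_simp
    exact hu.symm
  -- Tinf p i ≤ p i / u
  have hTinfp : ∀ i, Tinf p i ≤ p i / u := by
    intro i
    refine le_of_tendsto (hTinf p hp0 i) ?_
    filter_upwards [eventually_gt_atTop (1 : ℝ)] with h hh
    have hlt : T (h • p) i < h * T p i := hscal p hp0 h hh i
    rw [← hTp i]
    have hhpos : (0 : ℝ) < h := lt_trans one_pos hh
    rw [div_le_iff₀ hhpos]
    linarith [mul_comm h (T p i) ▸ hlt]
  -- Tinf monotone
  have hTinfmono : ∀ x x' : Fin N → ℝ, 0 ≤ x → x ≤ x' → ∀ i, Tinf x i ≤ Tinf x' i := by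
    intro x x' hx hxx' i
    refine le_of_tendsto_of_tendsto (hTinf x hx i) (hTinf x' (le_trans hx hxx') i) ?_
    filter_upwards [eventually_gt_atTop (0 : ℝ)] with h hh
    have h1 : (0 : Fin N → ℝ) ≤ h • x := fun j => by
      simpa using mul_nonneg hh.le (hx j)
    have h2 : h • x ≤ h • x' := fun j => by
      simpa using mul_le_mul_of_nonneg_left (hxx' j) hh.le
    exact div_le_div_of_nonneg_right (hmono _ _ h1 h2 i) hh.le
  -- Tinf positively homogeneous
  have hTinfhom : ∀ (c : ℝ), 0 < c → ∀ x : Fin N → ℝ, 0 ≤ x → ∀ i,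
      Tinf (c • x) i = c * Tinf x i := by
    intro c hc x hx i
    have hcx : (0 : Fin N → ℝ) ≤ c • x := fun j => by
      simpa using mul_nonneg hc.le (hx j)
    have hcomp : Tendsto (fun h : ℝ => c * (T ((c * h) • x) i / (c * h))) atTop
        (nhds (c * Tinf x i)) := by
      exact ((hTinf x hx i).comp (tendsto_id.const_mul_atTop hc)).const_mul c
    have heq : Tendsto (fun h : ℝ => T (h • (c • x)) i / h) atTop (nhds (c * Tinf x i)) := by
      refine hcomp.congr' ?_
      filter_upwards [eventually_gt_atTop (0 : ℝ)] with h hh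
      have h1 : (c * h) • x = h • (c • x) := by
        rw [smul_smul, mul_comm]
      rw [h1]
      field_simp
    exact tendsto_nhds_unique (hTinf (c • x) hcx i) heq
  -- every eigenvalue ≤ 1/u
  have heig : ∀ μ : ℝ, (0 ≤ μ ∧ ∃ x : Fin N → ℝ, 0 ≤ x ∧ x ≠ 0 ∧ Tinf x = μ • x) →
      μ ≤ 1 / u := by
    rintro μ ⟨hμ, y, hy0, hyne, hyeig⟩
    -- c := max of y i / p i
    set c := Finset.univ.sup' (Finset.univ_nonempty (α := Fin N)) (fun i => y i / p i) with hc
    obtain ⟨i0, _, hi0⟩ := Finset.exists_mem_eq_sup' (Finset.univ_nonempty (α := Fin N))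
      (fun i => y i / p i)
    obtain ⟨j, hj⟩ : ∃ j, y j ≠ 0 := by
      by_contra hcon
      push_neg at hcon
      exact hyne (funext hcon)
    have hcpos : 0 < c := by
      have : 0 < y j / p j := div_pos (lt_of_le_of_ne (hy0 j) (Ne.symm hj)) (hP j)
      exact lt_of_lt_of_le this (Finset.le_sup' (fun i => y i / p i) (Finset.mem_univ j))
    set z : Fin N → ℝ := c⁻¹ • y with hz
    have hz0 : (0 : Fin N → ℝ) ≤ z := fun i => by
      simpa [hz] using mul_nonneg (inv_nonneg.mpr hcpos.le) (hy0 i)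
    have hzp : z ≤ p := by
      intro i
      have h1 : y i / p i ≤ c := Finset.le_sup' (fun i => y i / p i) (Finset.mem_univ i)
      have h2 : y i ≤ c * p i := by
        rw [div_le_iff₀ (hP i)] at h1
        exact h1
      simp only [hz, Pi.smul_apply, smul_eq_mul]
      calc c⁻¹ * y i ≤ c⁻¹ * (c * p i) := mul_le_mul_of_nonneg_left h2 (inv_nonneg.mpr hcpos.le)
        _ = p i := by field_simp
    have hci0 : c = y i0 / p i0 := by rw [hc]; exact hi0
    have hyi0 : y i0 ≠ 0 := by
      intro h
      rw [hci0, h, zero_div] at hcpos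
      exact lt_irrefl 0 hcpos
    have hzi0 : z i0 = p i0 := by
      simp only [hz, Pi.smul_apply, smul_eq_mul]
      rw [hci0]
      field_simp [hyi0]
    -- Tinf z i0 = μ * z i0
    have hTz : Tinf z i0 = μ * p i0 := by
      rw [hz, hTinfhom c⁻¹ (inv_pos.mpr hcpos) y hy0, hyeig]
      simp only [Pi.smul_apply, smul_eq_mul]
      rw [← hzi0]
      simp [hz]
      ring
    have hle : Tinf z i0 ≤ p i0 / u := le_trans (hTinfmono z p hz0 hzp i0) (hTinfp i0)
    rw [hTz] at hle
    rw [le_div_iff₀ hU] at hle ⊢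
    nlinarith [hP i0]
  have hlam_le : laminf ≤ 1 / u := by
    rw [hrad]
    exact Real.sSup_le (fun μ hμ => heig μ hμ) (le_of_lt (by positivity))
  -- q ≤ u * (α * νb (T p))
  have hq_le : q ≤ u * (α * νb (T p)) := by
    have h1 : νa p = u * νa (T p) := by
      conv_lhs => rw [hPeq]
      rw [hνas, abs_of_pos hU]
    have h2 : νa (T p) ≤ α * νb (T p) := hab _
    calc q = u * νa (T p) := by rw [← hPa, h1]
      _ ≤ u * (α * νb (T p)) := mul_le_mul_of_nonneg_left h2 hU.le
  rw [hEq]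
  apply le_min
  · exact one_div_le_one_div_of_le hT0pos hTpT0
  · rw [div_le_div_iff₀ hTpb_pos (mul_pos hlaminf_pos hq)]
    have h3 : laminf * u ≤ 1 := by
      rw [le_div_iff₀ hU] at hlam_le
      exact hlam_le
    nlinarith [mul_le_mul_of_nonneg_left hq_le hlaminf_pos.le, hνbnn (T p)]
end

section
/- Let T : ℝ^N_+ → ℝ^N_{++} be a continuous SI mapping, ‖·‖_a and ‖·‖_b monotone norms on ℝ^N, and suppose λ_∞ := ρ(T_∞) > 0, where T_∞ is the asymptotic mapping of T. Suppose for each p̄ > 0 the pair (P(p̄), U(p̄)) ∈ ℝ^N_{++} × ℝ_{++} satisfies P(p̄) = U(p̄) T(P(p̄)) and ‖P(p̄)‖_a = p̄, and set E(p̄) := U(p̄)/‖P(p̄)‖_b. Then: (a) U(p̄) ∈ Θ(1) and E(p̄) ∈ Θ(1/p̄) as p̄ → ∞; and (b) U(p̄) ∈ Θ(p̄) and E(p̄) ∈ Θ(1) as p̄ → 0⁺. Explicitly, for (a) there exist k₀, k₁ > 0 and p̄₀ > 0 such that for all p̄ ≥ p̄₀: k₀ ≤ U(p̄) ≤ k₁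 and k₀/p̄ ≤ E(p̄) ≤ k₁/p̄; for (b) there exist c₀, c₁ > 0 and p̄₁ > 0 such that for all 0 < p̄ ≤ p̄₁: c₀ p̄ ≤ U(p̄) ≤ c₁ p̄ and c₀ ≤ E(p̄) ≤ c₁. -/
open Filter Topology

lemma aux16_nonneg {N : ℕ} (ν : (Fin N → ℝ) → ℝ)
    (hνs : ∀ (a : ℝ) (x : Fin N → ℝ), ν (a • x) = |a| * ν x)
    (hνt : ∀ x y : Fin N → ℝ, ν (x + y) ≤ ν x + ν y) (x : Fin N → ℝ) :
    0 ≤ ν x := by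
  have h0 : ν 0 = 0 := by simpa using hνs 0 0
  have hneg : ν (-x) = ν x := by simpa using hνs (-1) x
  have h := hνt x (-x)
  rw [add_neg_cancel, h0, hneg] at h
  linarith

lemma aux16_single {N : ℕ} (i : Fin N) (c : ℝ) :
    (Pi.single i c : Fin N → ℝ) = c • (Pi.single i 1 : Fin N → ℝ) := by
  funext j
  by_cases h : j = i <;> simp [Pi.single_apply, h]

lemma aux16_coord {N : ℕ} (ν : (Fin N → ℝ) → ℝ)
    (hνs : ∀ (a : ℝ) (x : Fin N → ℝ), ν (a • x) = |a| * ν x)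
    (hνm : ∀ x y : Fin N → ℝ, 0 ≤ x → x ≤ y → ν x ≤ ν y)
    {x : Fin N → ℝ} (hx : 0 ≤ x) (i : Fin N) :
    x i * ν (Pi.single i 1) ≤ ν x := by
  have h1 : (Pi.single i (x i) : Fin N → ℝ) ≤ x := by
    intro j
    by_cases h : j = i
    · subst h; simp
    · simp [Pi.single_apply, h]
      exact hx j
  have h0 : (0 : Fin N → ℝ) ≤ Pi.single i (x i) := by
    intro j
    by_cases h : j = i
    · subst h; simpa using hx j
    · simp [Pi.single_apply, h]
  calc x i * ν (Pi.single i 1) = ν (Pi.single i (x i)) := by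
        rw [aux16_single i (x i), hνs, abs_of_nonneg (hx i)]
    _ ≤ ν x := hνm _ _ h0 h1

lemma aux16_tri {N : ℕ} (ν : (Fin N → ℝ) → ℝ)
    (hνs : ∀ (a : ℝ) (x : Fin N → ℝ), ν (a • x) = |a| * ν x)
    (hνt : ∀ x y : Fin N → ℝ, ν (x + y) ≤ ν x + ν y)
    {x : Fin N → ℝ} (hx : 0 ≤ x) :
    ν x ≤ ∑ i, x i * ν (Pi.single i 1) := by
  have h0 : ν 0 = 0 := by simpa using hνs 0 0
  have key : ν x ≤ ∑ i, ν (Pi.single i (x i)) := by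
    conv_lhs => rw [← Finset.univ_sum_single x]
    exact Finset.le_sum_of_subadditive ν h0.le hνt _ _
  refine key.trans_eq (Finset.sum_congr rfl fun i _ => ?_)
  rw [aux16_single i (x i), hνs, abs_of_nonneg (hx i)]

lemma aux16_compare {N : ℕ} (ν ν' : (Fin N → ℝ) → ℝ)
    (hν0 : ∀ x, ν x = 0 ↔ x = 0)
    (hνs : ∀ (a : ℝ) (x : Fin N → ℝ), ν (a • x) = |a| * ν x)
    (hνt : ∀ x y : Fin N → ℝ, ν (x + y) ≤ ν x + ν y)
    (hνm : ∀ x y : Fin N → ℝ, 0 ≤ x → x ≤ y → ν x ≤ ν y)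
    (hν's : ∀ (a : ℝ) (x : Fin N → ℝ), ν' (a • x) = |a| * ν' x)
    (hν't : ∀ x y : Fin N → ℝ, ν' (x + y) ≤ ν' x + ν' y)
    {x : Fin N → ℝ} (hx : 0 ≤ x) :
    ν' x ≤ (∑ i, ν' (Pi.single i 1) / ν (Pi.single i 1)) * ν x := by
  have hnn' := aux16_nonneg ν' hν's hν't
  have hnn := aux16_nonneg ν hνs hνt
  have hepos : ∀ i : Fin N, 0 < ν (Pi.single i 1) := by
    intro i
    have hne : (Pi.single i 1 : Fin N → ℝ) ≠ 0 := by
      intro h; have := congrFun h i; simp at this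
    exact (hnn _).lt_of_ne (fun h => hne ((hν0 _).mp h.symm))
  calc ν' x ≤ ∑ i, x i * ν' (Pi.single i 1) := aux16_tri ν' hν's hν't hx
    _ ≤ ∑ i, ν' (Pi.single i 1) / ν (Pi.single i 1) * ν x := by
        apply Finset.sum_le_sum
        intro i _
        have hxi : x i * ν (Pi.single i 1) ≤ ν x := aux16_coord ν hνs hνm hx i
        have hx2 : x i ≤ ν x / ν (Pi.single i 1) := (le_div_iff₀ (hepos i)).mpr hxi
        calc x i * ν' (Pi.single i 1)
            ≤ (ν x / ν (Pi.single i 1)) * ν' (Pi.single i 1) :=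
              mul_le_mul_of_nonneg_right hx2 (hnn' _)
          _ = ν' (Pi.single i 1) / ν (Pi.single i 1) * ν x := by ring
    _ = (∑ i, ν' (Pi.single i 1) / ν (Pi.single i 1)) * ν x := by
        rw [Finset.sum_mul]

/-- Asymptotic scaling of the utility and efficiency functions of
the canonical max-min utility problem: U ∈ Θ(1) and E ∈ Θ(1/p̄) as p̄ → ∞;
U ∈ Θ(p̄) and E ∈ Θ(1) as p̄ → 0⁺. -/
theorem stmt16 {N : ℕ} (T : (Fin N → ℝ) → (Fin N → ℝ))
    (hpos : ∀ x : Fin N → ℝ, 0 ≤ x → ∀ i, 0 < T x i)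
    (hmono : ∀ x y : Fin N → ℝ, 0 ≤ x → x ≤ y → T x ≤ T y)
    (hscal : ∀ x : Fin N → ℝ, 0 ≤ x → ∀ α : ℝ, 1 < α → ∀ i, T (α • x) i < α * T x i)
    (hcont : ContinuousOn T {x : Fin N → ℝ | 0 ≤ x})
    (νa νb : (Fin N → ℝ) → ℝ)
    (hνa0 : ∀ x, νa x = 0 ↔ x = 0)
    (hνas : ∀ (a : ℝ) (x : Fin N → ℝ), νa (a • x) = |a| * νa x)
    (hνat : ∀ x y : Fin N → ℝ, νa (x + y) ≤ νa x + νa y)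
    (hνam : ∀ x y : Fin N → ℝ, 0 ≤ x → x ≤ y → νa x ≤ νa y)
    (hνb0 : ∀ x, νb x = 0 ↔ x = 0)
    (hνbs : ∀ (a : ℝ) (x : Fin N → ℝ), νb (a • x) = |a| * νb x)
    (hνbt : ∀ x y : Fin N → ℝ, νb (x + y) ≤ νb x + νb y)
    (hνbm : ∀ x y : Fin N → ℝ, 0 ≤ x → x ≤ y → νb x ≤ νb y)
    (Tinf : (Fin N → ℝ) → (Fin N → ℝ))
    (hTinf : ∀ x : Fin N → ℝ, 0 ≤ x → ∀ i,
      Tendsto (fun h : ℝ => T (h • x) i / h) atTop (nhds (Tinf x i)))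
    (laminf : ℝ)
    (hrad : laminf = sSup {μ : ℝ | 0 ≤ μ ∧
      ∃ x : Fin N → ℝ, 0 ≤ x ∧ x ≠ 0 ∧ Tinf x = μ • x})
    (hlaminf_pos : 0 < laminf)
    (P : ℝ → Fin N → ℝ) (U : ℝ → ℝ)
    (hsol : ∀ q : ℝ, 0 < q →
      (∀ i, 0 < P q i) ∧ 0 < U q ∧ P q = U q • T (P q) ∧ νa (P q) = q)
    (E : ℝ → ℝ) (hE : ∀ q : ℝ, E q = U q / νb (P q)) :
    (∃ k₀ k₁ q₀ : ℝ, 0 < k₀ ∧ 0 < k₁ ∧ 0 < q₀ ∧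
      ∀ q : ℝ, q₀ ≤ q →
        (k₀ ≤ U q ∧ U q ≤ k₁) ∧ (k₀ / q ≤ E q ∧ E q ≤ k₁ / q)) ∧
    (∃ c₀ c₁ q₁ : ℝ, 0 < c₀ ∧ 0 < c₁ ∧ 0 < q₁ ∧
      ∀ q : ℝ, 0 < q → q ≤ q₁ →
        (c₀ * q ≤ U q ∧ U q ≤ c₁ * q) ∧ (c₀ ≤ E q ∧ E q ≤ c₁)) := by
  -- N ≠ 0
  have hN : N ≠ 0 := by
    intro h
    subst h
    obtain ⟨_, _, _, hnorm⟩ := hsol 1 one_pos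
    have hP0 : P 1 = 0 := by funext i; exact i.elim0
    rw [hP0, (hνa0 0).mpr rfl] at hnorm
    exact one_ne_zero hnorm.symm
  have i0 : Fin N := ⟨0, Nat.pos_of_ne_zero hN⟩
  have hνa_nn := aux16_nonneg νa hνas hνat
  have hνb_nn := aux16_nonneg νb hνbs hνbt
  have hνa_pos : ∀ x : Fin N → ℝ, x ≠ 0 → 0 < νa x := fun x hx =>
    (hνa_nn x).lt_of_ne (fun h => hx ((hνa0 x).mp h.symm))
  have pos_ne : ∀ y : Fin N → ℝ, (∀ i, 0 < y i) → y ≠ 0 := by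
    intro y hy h
    have := hy i0
    rw [h] at this
    exact lt_irrefl 0 this
  -- U q = q / νa (T (P q))
  have hfacts : ∀ q : ℝ, 0 < q → 0 < νa (T (P q)) ∧ U q = q / νa (T (P q)) := by
    intro q hq
    obtain ⟨hP, hU, hfix, hnorm⟩ := hsol q hq
    have hTP : ∀ i, 0 < T (P q) i := hpos _ (fun i => (hP i).le)
    have h1 : 0 < νa (T (P q)) := hνa_pos _ (pos_ne _ hTP)
    have h2 : q = U q * νa (T (P q)) := by
      calc q = νa (P q) := hnorm.symm
        _ = νa (U q • T (P q)) := by rw [← hfix]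
        _ = U q * νa (T (P q)) := by rw [hνas, abs_of_pos hU]
    refine ⟨h1, ?_⟩
    rw [eq_div_iff h1.ne']
    linarith
  -- subhomogeneity
  have hsub : ∀ x : Fin N → ℝ, 0 ≤ x → ∀ α : ℝ, 1 ≤ α → ∀ i, T (α • x) i ≤ α * T x i := by
    intro x hx α hα i
    rcases eq_or_lt_of_le hα with h | h
    · rw [← h, one_smul, one_mul]
    · exact (hscal x hx α h i).le
  -- T (h • x) ≥ h • Tinf x
  have hTinf_le : ∀ x : Fin N → ℝ, 0 ≤ x → ∀ h : ℝ, 0 < h → ∀ i,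
      h * Tinf x i ≤ T (h • x) i := by
    intro x hx h hh i
    have hle : Tinf x i ≤ T (h • x) i / h := by
      refine le_of_tendsto (hTinf x hx i) ?_
      filter_upwards [eventually_ge_atTop h] with h' hh'
      have hh'pos : 0 < h' := lt_of_lt_of_le hh hh'
      have hα : 1 ≤ h' / h := (one_le_div hh).mpr hh'
      have hs := hsub (h • x) (smul_nonneg hh.le hx) (h' / h) hα i
      rw [smul_smul, div_mul_cancel₀ _ hh.ne'] at hs
      rw [div_le_div_iff₀ hh'pos hh]
      have hTnn : 0 ≤ T (h • x) i := (hpos _ (smul_nonneg hh.le hx) i).le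
      calc T (h' • x) i * h ≤ (h' / h * T (h • x) i) * h :=
            mul_le_mul_of_nonneg_right hs hh.le
        _ = T (h • x) i * h' := by field_simp
    calc h * Tinf x i ≤ h * (T (h • x) i / h) := by
          exact mul_le_mul_of_nonneg_left hle hh.le
      _ = T (h • x) i := by field_simp
  -- eigenpair
  obtain ⟨μ, xs, hμ, hxs0, hxsne, hxse⟩ :
      ∃ (μ : ℝ) (xs : Fin N → ℝ), 0 < μ ∧ 0 ≤ xs ∧ xs ≠ 0 ∧ Tinf xs = μ • xs := by
    set S := {μ : ℝ | 0 ≤ μ ∧ ∃ x : Fin N → ℝ, 0 ≤ x ∧ x ≠ 0 ∧ Tinf x = μ • x} with hS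
    have hSne : S.Nonempty := by
      by_contra h
      rw [Set.not_nonempty_iff_eq_empty] at h
      rw [hrad, h, Real.sSup_empty] at hlaminf_pos
      exact lt_irrefl 0 hlaminf_pos
    have hlt : laminf / 2 < sSup S := by rw [← hrad]; linarith
    obtain ⟨μ, hμS, hμgt⟩ := exists_lt_of_lt_csSup hSne hlt
    obtain ⟨hμ0, x, hx0, hxne, hxe⟩ := hμS
    exact ⟨μ, x, by linarith, hx0, hxne, hxe⟩
  -- global upper bound on U
  have hUle : ∀ q : ℝ, 0 < q → U q ≤ 1 / μ := by
    intro q hq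
    obtain ⟨hP, hU, hfix, hnorm⟩ := hsol q hq
    have hsupp : ∃ i, 0 < xs i := by
      by_contra h
      push_neg at h
      exact hxsne (funext fun i => le_antisymm (h i) (hxs0 i))
    set F := Finset.univ.filter (fun i => 0 < xs i) with hF
    have hFne : F.Nonempty := by
      obtain ⟨i, hi⟩ := hsupp
      exact ⟨i, by simp [hF, hi]⟩
    obtain ⟨j, hjF, hjmin⟩ := Finset.exists_mem_eq_inf' hFne (fun i => P q i / xs i)
    set t := F.inf' hFne (fun i => P q i / xs i) with ht
    have hxsj : 0 < xs j := by
      have := hjF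
      rw [hF, Finset.mem_filter] at this
      exact this.2
    have ht_pos : 0 < t := by
      rw [hjmin]
      exact div_pos (hP j) hxsj
    have htle : t • xs ≤ P q := by
      intro i
      by_cases hi : 0 < xs i
      · have hti : t ≤ P q i / xs i := Finset.inf'_le _ (by simp [hF, hi])
        have : t * xs i ≤ (P q i / xs i) * xs i :=
          mul_le_mul_of_nonneg_right hti (hxs0 i)
        rw [div_mul_cancel₀ _ hi.ne'] at this
        simpa using this
      · have hxi : xs i = 0 := le_antisymm (not_lt.mp hi) (hxs0 i)
        simp [hxi]
        exact (hP i).le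
    have h1 : t * (μ * xs j) ≤ T (t • xs) j := by
      have := hTinf_le xs hxs0 t ht_pos j
      rw [hxse] at this
      simpa using this
    have h2 : T (t • xs) j ≤ T (P q) j :=
      hmono _ _ (smul_nonneg ht_pos.le hxs0) htle j
    have h3 : P q j = U q * T (P q) j := by
      conv_lhs => rw [hfix]
      simp
    have h4 : t * xs j = P q j := by
      rw [hjmin, div_mul_cancel₀ _ hxsj.ne']
    have h5 : U q * (μ * P q j) ≤ P q j := by
      calc U q * (μ * P q j) = U q * (t * (μ * xs j)) := by rw [← h4]; ring
        _ ≤ U q * T (P q) j :=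
            mul_le_mul_of_nonneg_left (le_trans h1 h2) hU.le
        _ = P q j := h3.symm
    have h6 : U q * μ ≤ 1 := by nlinarith [hP j]
    rw [le_div_iff₀ hμ]
    linarith
  -- the comparison vector w
  set w : Fin N → ℝ := fun i => (νa (Pi.single i 1))⁻¹ with hw
  have hsingle_ne : ∀ i : Fin N, (Pi.single i 1 : Fin N → ℝ) ≠ 0 := by
    intro i h
    have := congrFun h i
    simp at this
  have hνa_e_pos : ∀ i, 0 < νa (Pi.single i 1) := fun i => hνa_pos _ (hsingle_ne i)
  have hw_nn : (0 : Fin N → ℝ) ≤ w := fun i => (inv_pos.mpr (hνa_e_pos i)).le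
  have hPle : ∀ q : ℝ, 0 < q → P q ≤ q • w := by
    intro q hq
    obtain ⟨hP, hU, hfix, hnorm⟩ := hsol q hq
    intro i
    have hc := aux16_coord νa hνas hνam (x := P q) (fun i => (hP i).le) i
    rw [hnorm] at hc
    have : P q i ≤ q / νa (Pi.single i 1) := (le_div_iff₀ (hνa_e_pos i)).mpr hc
    simpa [hw, div_eq_mul_inv] using this
  have hTw_pos : ∀ i, 0 < T w i := hpos w hw_nn
  have hνaTw : 0 < νa (T w) := hνa_pos _ (pos_ne _ hTw_pos)
  have hνaT0 : 0 < νa (T 0) := hνa_pos _ (pos_ne _ (hpos 0 le_rfl))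
  -- lower bound for small q
  have hUlow : ∀ q : ℝ, 0 < q → q ≤ 1 → q / νa (T w) ≤ U q := by
    intro q hq hq1
    obtain ⟨hTPpos, hUeq⟩ := hfacts q hq
    obtain ⟨hP, hU, hfix, hnorm⟩ := hsol q hq
    rw [hUeq]
    have hPw : P q ≤ w := by
      refine le_trans (hPle q hq) ?_
      intro i
      have : q * w i ≤ 1 * w i := mul_le_mul_of_nonneg_right hq1 (hw_nn i)
      simpa using this
    have hTle : νa (T (P q)) ≤ νa (T w) := by
      apply hνam
      · exact fun i => (hpos _ (fun i => (hP i).le) i).le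
      · exact hmono _ _ (fun i => (hP i).le) hPw
    gcongr
  -- lower bound for large q
  have hUlow2 : ∀ q : ℝ, 1 ≤ q → (νa (T w))⁻¹ ≤ U q := by
    intro q hq1
    have hq : 0 < q := lt_of_lt_of_le one_pos hq1
    obtain ⟨hTPpos, hUeq⟩ := hfacts q hq
    obtain ⟨hP, hU, hfix, hnorm⟩ := hsol q hq
    have h1 : T (P q) ≤ q • T w := by
      have h3 : T (P q) ≤ T (q • w) :=
        hmono _ _ (fun i => (hP i).le) (hPle q hq)
      intro i
      calc T (P q) i ≤ T (q • w) i := h3 i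
        _ ≤ q * T w i := hsub w hw_nn q hq1 i
  
    have h5 : νa (T (P q)) ≤ q * νa (T w) := by
      calc νa (T (P q)) ≤ νa (q • T w) := by
            apply hνam
            · exact fun i => (hpos _ (fun i => (hP i).le) i).le
            · exact h1
        _ = q * νa (T w) := by rw [hνas, abs_of_pos hq]
    rw [hUeq, inv_eq_one_div, div_le_div_iff₀ hνaTw hTPpos]
    linarith
  -- upper bound U q ≤ q / νa (T 0)
  have hUup0 : ∀ q : ℝ, 0 < q → U q ≤ q / νa (T 0) := by
    intro q hq
    obtain ⟨hTPpos, hUeq⟩ := hfacts q hq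
    obtain ⟨hP, hU, hfix, hnorm⟩ := hsol q hq
    rw [hUeq]
    have hTle : νa (T 0) ≤ νa (T (P q)) := by
      apply hνam
      · exact fun i => (hpos 0 le_rfl i).le
      · exact hmono _ _ le_rfl (fun i => (hP i).le)
    gcongr
  -- norm comparison constants
  set Cb := ∑ i, νb (Pi.single i 1) / νa (Pi.single i 1) with hCb
  set Ca := ∑ i, νa (Pi.single i 1) / νb (Pi.single i 1) with hCa
  have hνb_pos : ∀ x : Fin N → ℝ, x ≠ 0 → 0 < νb x := fun x hx =>
    (hνb_nn x).lt_of_ne (fun h => hx ((hνb0 x).mp h.symm))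
  have hνb_e_pos : ∀ i, 0 < νb (Pi.single i 1) := fun i => hνb_pos _ (hsingle_ne i)
  have hCb_pos : 0 < Cb :=
    Finset.sum_pos (fun i _ => div_pos (hνb_e_pos i) (hνa_e_pos i)) ⟨i0, Finset.mem_univ i0⟩
  have hCa_pos : 0 < Ca :=
    Finset.sum_pos (fun i _ => div_pos (hνa_e_pos i) (hνb_e_pos i)) ⟨i0, Finset.mem_univ i0⟩
  have hνbP : ∀ q : ℝ, 0 < q → q / Ca ≤ νb (P q) ∧ νb (P q) ≤ Cb * q := by
    intro q hq
    obtain ⟨hP, hU, hfix, hnorm⟩ := hsol q hq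
    have hPnn : (0 : Fin N → ℝ) ≤ P q := fun i => (hP i).le
    have h1 : νb (P q) ≤ Cb * νa (P q) :=
      aux16_compare νa νb hνa0 hνas hνat hνam hνbs hνbt hPnn
    have h2 : νa (P q) ≤ Ca * νb (P q) :=
      aux16_compare νb νa hνb0 hνbs hνbt hνbm hνas hνat hPnn
    rw [hnorm] at h1 h2
    constructor
    · rw [div_le_iff₀ hCa_pos]
      linarith
    · exact h1
  have hνbP_pos : ∀ q : ℝ, 0 < q → 0 < νb (P q) := by
    intro q hq
    have := (hνbP q hq).1
    have h2 : 0 < q / Ca := div_pos hq hCa_pos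
    linarith
  -- assemble
  constructor
  · -- large q
    refine ⟨min ((νa (T w))⁻¹) ((νa (T w))⁻¹ / Cb),
      max (1 / μ) (1 / μ * Ca), 1, ?_, ?_, one_pos, ?_⟩
    · apply lt_min
      · exact inv_pos.mpr hνaTw
      · exact div_pos (inv_pos.mpr hνaTw) hCb_pos
    · exact lt_max_of_lt_left (div_pos one_pos hμ)
    · intro q hq1
      have hq : 0 < q := lt_of_lt_of_le one_pos hq1
      have hU1 : (νa (T w))⁻¹ ≤ U q := hUlow2 q hq1
      have hU2 : U q ≤ 1 / μ := hUle q hq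
      obtain ⟨hνb1, hνb2⟩ := hνbP q hq
      have hνbpos := hνbP_pos q hq
      have hUpos : 0 < U q := (hsol q hq).2.1
      constructor
      · constructor
        · exact le_trans (min_le_left _ _) hU1
        · exact le_trans hU2 (le_max_left _ _)
      · rw [hE]
        constructor
        · -- (min .. ..)/q ≤ U q / νb (P q)
          have hlow : (νa (T w))⁻¹ / Cb / q ≤ U q / νb (P q) := by
            rw [div_div]
            exact div_le_div₀ hUpos.le hU1 hνbpos hνb2
          refine le_trans ?_ hlow
          gcongr
          exact min_le_right _ _
        · have hhigh : U q / νb (P q) ≤ (1 / μ * Ca) / q := by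
            rw [div_le_div_iff₀ hνbpos hq]
            have h6 : q / Ca ≤ νb (P q) := hνb1
            have h7 : U q * q ≤ (1 / μ) * q := mul_le_mul_of_nonneg_right hU2 hq.le
            have h8 : (1 / μ) * q = (1 / μ * Ca) * (q / Ca) := by
              field_simp
            have h9 : (1 / μ * Ca) * (q / Ca) ≤ (1 / μ * Ca) * νb (P q) := by
              apply mul_le_mul_of_nonneg_left h6
              positivity
            calc U q * q ≤ (1 / μ) * q := h7
              _ = (1 / μ * Ca) * (q / Ca) := h8
              _ ≤ (1 / μ * Ca) * νb (P q) := h9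
          refine le_trans hhigh ?_
          gcongr
          · exact le_max_right _ _
      
  · -- small q
    refine ⟨min ((νa (T w))⁻¹) ((νa (T w))⁻¹ / Cb),
      max ((νa (T 0))⁻¹) ((νa (T 0))⁻¹ * Ca), 1, ?_, ?_, one_pos, ?_⟩
    · apply lt_min
      · exact inv_pos.mpr hνaTw
      · exact div_pos (inv_pos.mpr hνaTw) hCb_pos
    · exact lt_max_of_lt_left (inv_pos.mpr hνaT0)
    · intro q hq hq1
      have hU1 : q / νa (T w) ≤ U q := hUlow q hq hq1
      have hU1' : (νa (T w))⁻¹ * q ≤ U q := by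
        rw [mul_comm, ← div_eq_mul_inv]
        exact hU1
      have hU2 : U q ≤ q / νa (T 0) := hUup0 q hq
      have hU2' : U q ≤ (νa (T 0))⁻¹ * q := by
        rw [mul_comm, ← div_eq_mul_inv]
        exact hU2
      obtain ⟨hνb1, hνb2⟩ := hνbP q hq
      have hνbpos := hνbP_pos q hq
      have hUpos : 0 < U q := (hsol q hq).2.1
      constructor
      · constructor
        · calc min ((νa (T w))⁻¹) ((νa (T w))⁻¹ / Cb) * q
                ≤ (νa (T w))⁻¹ * q := by
                  gcongr
                  exact min_le_left _ _
            _ ≤ U q := hU1'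
        · calc U q ≤ (νa (T 0))⁻¹ * q := hU2'
            _ ≤ max ((νa (T 0))⁻¹) ((νa (T 0))⁻¹ * Ca) * q := by
                  gcongr
                  exact le_max_left _ _
      · rw [hE]
        constructor
        · have hlow : (νa (T w))⁻¹ * q / (Cb * q) ≤ U q / νb (P q) :=
            div_le_div₀ hUpos.le hU1' hνbpos hνb2
          have heq : (νa (T w))⁻¹ * q / (Cb * q) = (νa (T w))⁻¹ / Cb := by
            field_simp
          rw [heq] at hlow
          exact le_trans (min_le_right _ _) hlow
        · have hhigh : U q / νb (P q) ≤ (νa (T 0))⁻¹ * Ca := by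
            rw [div_le_iff₀ hνbpos]
            calc U q ≤ (νa (T 0))⁻¹ * q := hU2'
              _ = (νa (T 0))⁻¹ * Ca * (q / Ca) := by field_simp
              _ ≤ (νa (T 0))⁻¹ * Ca * νb (P q) := by
                  apply mul_le_mul_of_nonneg_left hνb1
                  positivity
          exact le_trans hhigh (le_max_right _ _)
end
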